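/- arXiv:2304.09045 — 7 statements merged into one kernel-verified Lean document; each statement's English description precedes it below -/
import Mathlib

section
/- Let G be a topological group and H a closed subgroup of finite index. Let (Bohr(G), β) be the Bohr compactification of G and let K be the closure of β(H) in Bohr(G). Then K is a finite-index subgroup of Bohr(G), the pair (K, β|_H) is a Bohr compactification of H, and K and Bohr(G) have the same identity component. -/
set_option linter.unusedSectionVars false

open Filter Topology Set Pointwise

lemma continuous_of_discrete_snd {X D Z : Type*} [TopologicalSpace X] [TopologicalSpace D]
    [DiscreteTopology D] [TopologicalSpace Z] {f : X × D → Z}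
    (h : ∀ d, Continuous fun x => f (x, d)) : Continuous f := by
  rw [continuous_iff_continuousAt]
  rintro ⟨x, d⟩
  unfold ContinuousAt
  rw [nhds_prod_eq, nhds_discrete D, Filter.prod_pure, Filter.tendsto_map'_iff]
  exact (h d).continuousAt

instance (ι : Type) : TopologicalSpace (Equiv.Perm ι) := ⊥
instance (ι : Type) : DiscreteTopology (Equiv.Perm ι) := ⟨rfl⟩

@[ext] structure Wreath (ι C : Type) where
  f : ι → C
  p : Equiv.Perm ι

namespace Wreath

variable {ι C : Type} [Group C]

instance : Mul (Wreath ι C) := ⟨fun a b => ⟨fun i => a.f (b.p i) * b.f i, a.p * b.p⟩⟩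
instance : One (Wreath ι C) := ⟨⟨1, 1⟩⟩
instance : Inv (Wreath ι C) := ⟨fun a => ⟨fun i => (a.f (a.p⁻¹ i))⁻¹, a.p⁻¹⟩⟩

@[simp] lemma mul_f (a b : Wreath ι C) (i : ι) : (a * b).f i = a.f (b.p i) * b.f i := rfl
@[simp] lemma mul_p (a b : Wreath ι C) : (a * b).p = a.p * b.p := rfl
@[simp] lemma one_f (i : ι) : (1 : Wreath ι C).f i = 1 := rfl
@[simp] lemma one_p : (1 : Wreath ι C).p = 1 := rfl
@[simp] lemma inv_f (a : Wreath ι C) (i : ι) : (a⁻¹).f i = (a.f (a.p⁻¹ i))⁻¹ := rfl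
@[simp] lemma inv_p (a : Wreath ι C) : (a⁻¹).p = a.p⁻¹ := rfl

instance : Group (Wreath ι C) where
  mul_assoc a b c := by
    ext i <;> simp [mul_assoc, Equiv.Perm.mul_apply]
  one_mul a := by ext i <;> simp
  mul_one a := by ext i <;> simp
  inv_mul_cancel a := by ext i <;> simp

variable [TopologicalSpace C]

instance : TopologicalSpace (Wreath ι C) :=
  TopologicalSpace.induced (fun w => (w.f, w.p)) inferInstance

def homeoProd : Wreath ι C ≃ₜ (ι → C) × Equiv.Perm ι where
  toFun w := (w.f, w.p)
  invFun q := ⟨q.1, q.2⟩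
  left_inv _ := rfl
  right_inv _ := rfl
  continuous_toFun := continuous_induced_dom
  continuous_invFun := continuous_induced_rng.2 continuous_id

lemma continuous_fcomp : Continuous fun w : Wreath ι C => w.f :=
  (continuous_induced_dom (α := Wreath ι C)).fst

lemma continuous_pcomp : Continuous fun w : Wreath ι C => w.p :=
  (continuous_induced_dom (α := Wreath ι C)).snd

lemma continuous_eval (i : ι) :
    Continuous fun q : (ι → C) × Equiv.Perm ι => q.1 (q.2 i) :=
  continuous_of_discrete_snd fun σ => continuous_apply (σ i)

instance [CompactSpace C] [Finite ι] : CompactSpace (Wreath ι C) :=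
  (homeoProd (ι := ι) (C := C)).symm.compactSpace

instance [T2Space C] : T2Space (Wreath ι C) :=
  (homeoProd (ι := ι) (C := C)).isEmbedding.t2Space

instance [IsTopologicalGroup C] : IsTopologicalGroup (Wreath ι C) where
  continuous_mul := by
    apply continuous_induced_rng.2
    apply Continuous.prodMk
    · apply continuous_pi
      intro i
      have h1 : Continuous fun pr : Wreath ι C × Wreath ι C => pr.1.f (pr.2.p i) :=
        (continuous_eval i).comp
          ((continuous_fcomp.comp continuous_fst).prodMk
            (continuous_pcomp.comp continuous_snd))
      have h2 : Continuous fun pr : Wreath ι C × Wreath ι C => pr.2.f i :=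
        (continuous_apply i).comp (continuous_fcomp.comp continuous_snd)
      exact h1.mul h2
    · have hm : Continuous fun q : Equiv.Perm ι × Equiv.Perm ι => q.1 * q.2 :=
        continuous_of_discreteTopology
      exact hm.comp
        ((continuous_pcomp.comp continuous_fst).prodMk
          (continuous_pcomp.comp continuous_snd))
  continuous_inv := by
    apply continuous_induced_rng.2
    apply Continuous.prodMk
    · have hinv : Continuous fun q : Equiv.Perm ι => q⁻¹ := continuous_of_discreteTopology
      apply continuous_pi
      intro i
      have h1 : Continuous fun w : Wreath ι C => w.f (w.p⁻¹ i) :=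
        (continuous_eval i).comp
          (continuous_fcomp.prodMk (hinv.comp continuous_pcomp))
      exact h1.inv
    · have hinv : Continuous fun q : Equiv.Perm ι => q⁻¹ := continuous_of_discreteTopology
      exact hinv.comp continuous_pcomp

end Wreath

/-- `(B, β)` is a Bohr compactification of the topological group `G`. -/
def IsBohrCompactification (G B : Type) [Group G] [TopologicalSpace G]
    [Group B] [TopologicalSpace B] (β : G →* B) : Prop :=
  Continuous β ∧ DenseRange β ∧ CompactSpace B ∧ T2Space B ∧ IsTopologicalGroup B ∧
    ∀ (K : Type) [Group K] [TopologicalSpace K] [IsTopologicalGroup K] [CompactSpace K]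
      [T2Space K] (α : G →* K), Continuous α →
      ∃ α' : B →* K, Continuous α' ∧ α'.comp β = α

section Extension

variable {G B : Type} [Group G] [TopologicalSpace G] [IsTopologicalGroup G]
    [Group B] [TopologicalSpace B] [IsTopologicalGroup B] [CompactSpace B] [T2Space B]

open scoped Classical in
/-- A section of `G ⧸ H` sending the trivial coset to `1`. -/
noncomputable def bohrRep (H : Subgroup G) (i : G ⧸ H) : G :=
  if i = QuotientGroup.mk 1 then 1 else i.out

lemma bohrRep_mk (H : Subgroup G) (i : G ⧸ H) : QuotientGroup.mk (bohrRep H i) = i := by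
  by_cases h : i = QuotientGroup.mk 1 <;> simp [bohrRep, h, QuotientGroup.out_eq']

lemma bohrRep_one (H : Subgroup G) : bohrRep H (QuotientGroup.mk 1) = 1 := by simp [bohrRep]

lemma bohrRep_mem (H : Subgroup G) (g : G) (i : G ⧸ H) :
    (bohrRep H (g • i))⁻¹ * (g * bohrRep H i) ∈ H := by
  rw [← QuotientGroup.eq, bohrRep_mk]
  have : (QuotientGroup.mk (g * bohrRep H i) : G ⧸ H) = g • QuotientGroup.mk (bohrRep H i) :=
    rfl
  rw [this, bohrRep_mk]

variable (H : Subgroup G) {C : Type} [Group C] [TopologicalSpace C] [IsTopologicalGroup C]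
    [CompactSpace C] [T2Space C]

/-- The induced homomorphism into the wreath product. -/
noncomputable def bohrInduced (α : ↥H →* C) : G →* Wreath (G ⧸ H) C where
  toFun g := ⟨fun i => α ⟨(bohrRep H (g • i))⁻¹ * (g * bohrRep H i), bohrRep_mem H g i⟩,
    MulAction.toPermHom G (G ⧸ H) g⟩
  map_one' := by
    ext i
    · show α ⟨(bohrRep H ((1 : G) • i))⁻¹ * (1 * bohrRep H i), _⟩ = 1
      have : (⟨(bohrRep H ((1 : G) • i))⁻¹ * (1 * bohrRep H i), bohrRep_mem H 1 i⟩ : ↥H)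
          = 1 := by
        ext
        simp [one_smul]
      rw [this, map_one]
    · show (MulAction.toPermHom G (G ⧸ H) 1) i = ((1 : Wreath (G ⧸ H) C).p) i
      rw [map_one]
      rfl
  map_mul' g₁ g₂ := by
    ext i
    · show α ⟨(bohrRep H ((g₁ * g₂) • i))⁻¹ * (g₁ * g₂ * bohrRep H i), _⟩ =
        α ⟨(bohrRep H (g₁ • (g₂ • i)))⁻¹ * (g₁ * bohrRep H (g₂ • i)), _⟩ *
        α ⟨(bohrRep H (g₂ • i))⁻¹ * (g₂ * bohrRep H i), _⟩
      rw [← map_mul]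
      congr 1
      ext
      show (bohrRep H ((g₁ * g₂) • i))⁻¹ * (g₁ * g₂ * bohrRep H i) =
        ((bohrRep H (g₁ • (g₂ • i)))⁻¹ * (g₁ * bohrRep H (g₂ • i))) *
        ((bohrRep H (g₂ • i))⁻¹ * (g₂ * bohrRep H i))
      rw [mul_smul]
      group
    · show (MulAction.toPermHom G (G ⧸ H) (g₁ * g₂)) i =
        (MulAction.toPermHom G (G ⧸ H) g₁ * MulAction.toPermHom G (G ⧸ H) g₂) i
      rw [map_mul]

lemma bohrInduced_continuous (hfin : H.FiniteIndex) (hclosed : IsClosed (H : Set G))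
    (α : ↥H →* C) (hα : Continuous α) : Continuous (bohrInduced H α) := by
  haveI := hfin
  classical
  have hopen : IsOpen (H : Set G) := Subgroup.isOpen_of_isClosed_of_finiteIndex H hclosed
  -- the full extension of α by 1
  set αfull : G → C := fun g => if hg : g ∈ H then α ⟨g, hg⟩ else 1 with hαfull
  have cαfull : Continuous αfull := by
    rw [continuous_iff_continuousAt]
    intro g
    by_cases hg : g ∈ H
    · have hco : ContinuousOn αfull (H : Set G) := by
        rw [continuousOn_iff_continuous_restrict]
        have : Set.domRestrict (H : Set G) αfull = α := by
          funext x
          show αfull ↑x = α x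
          rw [hαfull]
          exact dif_pos x.2
        rw [this]
        exact hα
      exact hco.continuousAt (hopen.mem_nhds hg)
    · have hev : αfull =ᶠ[nhds g] fun _ => 1 := by
        apply Filter.eventuallyEq_of_mem (hclosed.isOpen_compl.mem_nhds hg)
        intro x hx
        rw [hαfull]
        exact dif_neg hx
      exact continuousAt_const.congr hev.symm
  -- the permutation part is locally constant
  have key : ∀ i j : G ⧸ H, IsOpen {g : G | g • i = j} := by
    intro i j
    have : {g : G | g • i = j} =
        (fun g : G => (g * bohrRep H i)⁻¹ * bohrRep H j) ⁻¹' (H : Set G) := by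
      ext g
      have h1 : (QuotientGroup.mk (g * bohrRep H i) : G ⧸ H) = g • i := by
        rw [show (QuotientGroup.mk (g * bohrRep H i) : G ⧸ H) =
          g • QuotientGroup.mk (bohrRep H i) from rfl, bohrRep_mk]
      show g • i = j ↔ (g * bohrRep H i)⁻¹ * bohrRep H j ∈ H
      rw [← QuotientGroup.eq, h1, bohrRep_mk]
    rw [this]
    exact hopen.preimage (by fun_prop)
  have cσ : Continuous fun g : G => MulAction.toPermHom G (G ⧸ H) g := by
    rw [continuous_discrete_rng]
    intro σ
    have : (fun g : G => MulAction.toPermHom G (G ⧸ H) g) ⁻¹' {σ} =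
        ⋂ i : G ⧸ H, {g : G | g • i = σ i} := by
      ext g
      simp only [Set.mem_preimage, Set.mem_singleton_iff, Set.mem_iInter, Set.mem_setOf_eq]
      constructor
      · intro h i; rw [← h]; rfl
      · intro h; ext i; exact h i
    rw [this]
    exact isOpen_iInter_of_finite fun i => key i (σ i)
  apply continuous_induced_rng.2
  apply Continuous.prodMk
  · apply continuous_pi
    intro i
    have heq : (fun g : G => (bohrInduced H α g).f i) =
        (fun q : G × Equiv.Perm (G ⧸ H) => αfull ((bohrRep H (q.2 i))⁻¹ * (q.1 * bohrRep H i)))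
          ∘ (fun g : G => (g, MulAction.toPermHom G (G ⧸ H) g)) := by
      funext g
      show α ⟨(bohrRep H (g • i))⁻¹ * (g * bohrRep H i), bohrRep_mem H g i⟩ =
        αfull ((bohrRep H (g • i))⁻¹ * (g * bohrRep H i))
      rw [hαfull]
      beta_reduce
      rw [dif_pos (bohrRep_mem H g i)]
    show Continuous fun g : G => (bohrInduced H α g).f i
    rw [heq]
    apply Continuous.comp
    · apply continuous_of_discrete_snd
      intro σ
      show Continuous fun g : G => αfull ((bohrRep H (σ i))⁻¹ * (g * bohrRep H i))
      exact cαfull.comp (continuous_const.mul (continuous_id.mul continuous_const))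
    · exact continuous_id.prodMk cσ
  · exact cσ


lemma bohr_extension (β : G →* B) (hB : IsBohrCompactification G B β)
    (hfin : H.FiniteIndex) (hclosed : IsClosed (H : Set G))
    (α : ↥H →* C) (hα : Continuous α) :
    ∃ α' : ((H.map β).topologicalClosure : Subgroup B) →* C, Continuous α' ∧
      ∀ h : ↥H, α' ⟨β h, Subgroup.le_topologicalClosure _ ⟨h, h.2, rfl⟩⟩ = α h := by
  haveI := hfin
  obtain ⟨hβc, hβd, _, _, _, huniv⟩ := hB
  obtain ⟨Φ', hΦ'c, hΦ'β⟩ := huniv (Wreath (G ⧸ H) C) (bohrInduced H α)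
    (bohrInduced_continuous H hfin hclosed α hα)
  have hΦ'βapp : ∀ g : G, Φ' (β g) = bohrInduced H α g := by
    intro g
    rw [← hΦ'β]
    rfl
  set i₀ : G ⧸ H := QuotientGroup.mk 1 with hi₀
  have hsmul : ∀ h : G, h ∈ H → h • i₀ = i₀ := by
    intro h hh
    rw [hi₀, show h • (QuotientGroup.mk (1 : G) : G ⧸ H) = QuotientGroup.mk (h * 1) from rfl,
      QuotientGroup.eq]
    simpa using H.inv_mem hh
  -- all elements of the closure fix the trivial coset
  have hfix : ∀ b : B, b ∈ (H.map β).topologicalClosure → (Φ' b).p i₀ = i₀ := by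
    have hcl : IsClosed {b : B | (Φ' b).p i₀ = i₀} := by
      have : {b : B | (Φ' b).p i₀ = i₀} =
          (fun b => (Φ' b).p) ⁻¹' {σ : Equiv.Perm (G ⧸ H) | σ i₀ = i₀} := rfl
      rw [this]
      exact (isClosed_discrete _).preimage (Wreath.continuous_pcomp.comp hΦ'c)
    intro b hb
    have hsub : (↑(H.map β) : Set B) ⊆ {b : B | (Φ' b).p i₀ = i₀} := by
      rintro _ ⟨h, hh, rfl⟩
      show (Φ' (β h)).p i₀ = i₀
      rw [hΦ'βapp h]
      show h • i₀ = i₀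
      exact hsmul h hh
    have hb' : b ∈ closure (↑(H.map β) : Set B) := hb
    exact closure_minimal hsub hcl hb'
  refine ⟨{ toFun := fun k => (Φ' ↑k).f i₀
            map_one' := by
              show (Φ' (1 : B)).f i₀ = 1
              rw [map_one]
              rfl
            map_mul' := fun k₁ k₂ => by
              have h2 := hfix (↑k₂) k₂.2
              show (Φ' ↑(k₁ * k₂)).f i₀ = (Φ' ↑k₁).f i₀ * (Φ' ↑k₂).f i₀
              have : ((k₁ * k₂ : ((H.map β).topologicalClosure : Subgroup B)) : B)
                  = ↑k₁ * ↑k₂ := rfl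
              rw [this, map_mul, Wreath.mul_f, h2] }, ?_, ?_⟩
  · exact ((continuous_apply i₀).comp Wreath.continuous_fcomp).comp
      (hΦ'c.comp continuous_subtype_val)
  · intro h
    show (Φ' (β ↑h)).f i₀ = α h
    rw [hΦ'βapp]
    show α ⟨(bohrRep H ((h : G) • i₀))⁻¹ * ((h : G) * bohrRep H i₀), _⟩ = α h
    congr 1
    ext
    show (bohrRep H ((h : G) • i₀))⁻¹ * ((h : G) * bohrRep H i₀) = (h : G)
    rw [hsmul (h : G) h.2, hi₀, bohrRep_one]
    group

end Extension

/-- for a closed finite-index subgroup `H ≤ G`, the closure `K` of `β(H)` in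
`Bohr(G)` has finite index, `(K, β|_H)` is a Bohr compactification of `H`, and `K` has the
same identity component as `Bohr(G)`. -/
theorem bohr_of_finiteIndex_subgroup (G B : Type) [Group G] [TopologicalSpace G]
    [IsTopologicalGroup G] [Group B] [TopologicalSpace B] [IsTopologicalGroup B]
    [CompactSpace B] [T2Space B]
    (β : G →* B) (hB : IsBohrCompactification G B β)
    (H : Subgroup G) (hclosed : IsClosed (H : Set G)) (hfin : H.FiniteIndex) :
    (((H.map β).topologicalClosure).FiniteIndex) ∧
    IsBohrCompactification H ((H.map β).topologicalClosure)
      (MonoidHom.codRestrict (β.comp H.subtype) (H.map β).topologicalClosure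
        (fun h => Subgroup.le_topologicalClosure _ ⟨h, h.2, rfl⟩)) ∧
    (Subtype.val '' connectedComponent (1 : (H.map β).topologicalClosure)
      = connectedComponent (1 : B)) := by
  haveI := hfin
  obtain ⟨hβc, hβd, _, _, _, huniv⟩ := hB
  set Ksub := (H.map β).topologicalClosure with hKsub
  have hKclosed : IsClosed (Ksub : Set B) := Subgroup.isClosed_topologicalClosure _
  -- Part 1 : finite index
  have hcover : (Set.univ : Set B) ⊆ ⋃ q : G ⧸ H, (β q.out) • (Ksub : Set B) := by
    have hUclosed : IsClosed (⋃ q : G ⧸ H, (β q.out) • (Ksub : Set B)) :=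
      isClosed_iUnion_of_finite fun q => hKclosed.smul (β q.out)
    have hsub : Set.range β ⊆ ⋃ q : G ⧸ H, (β q.out) • (Ksub : Set B) := by
      rintro _ ⟨g, rfl⟩
      apply Set.mem_iUnion.2 ⟨QuotientGroup.mk g, ?_⟩
      rw [Set.mem_smul_set_iff_inv_smul_mem, smul_eq_mul, ← map_inv, ← map_mul]
      have hmem : (QuotientGroup.mk g : G ⧸ H).out⁻¹ * g ∈ H := by
        rw [← QuotientGroup.eq, QuotientGroup.out_eq']
      exact Subgroup.le_topologicalClosure _ ⟨_, hmem, rfl⟩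
    calc (Set.univ : Set B) = closure (Set.range β) := hβd.closure_range.symm
      _ ⊆ ⋃ q : G ⧸ H, (β q.out) • (Ksub : Set B) := hUclosed.closure_subset_iff.2 hsub
  have hfinquot : Finite (B ⧸ Ksub) := by
    apply Finite.of_surjective (fun q : G ⧸ H => (QuotientGroup.mk (β q.out) : B ⧸ Ksub))
    intro x
    refine QuotientGroup.induction_on x ?_
    intro b
    obtain ⟨q, hq⟩ := Set.mem_iUnion.1 (hcover (Set.mem_univ b))
    refine ⟨q, ?_⟩
    rw [Set.mem_smul_set_iff_inv_smul_mem, smul_eq_mul] at hq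
    exact (QuotientGroup.eq.2 hq)
  haveI := hfinquot
  haveI hKfin : Ksub.FiniteIndex := Subgroup.finiteIndex_of_finite_quotient
  refine ⟨hKfin, ⟨?_, ?_, ?_, ?_, ?_, ?_⟩, ?_⟩
  -- continuity
  · exact Continuous.subtype_mk (hβc.comp continuous_subtype_val) _
  -- dense range
  · intro x
    rw [closure_subtype]
    have himg : (Subtype.val '' Set.range (MonoidHom.codRestrict (β.comp H.subtype) Ksub
        (fun h => Subgroup.le_topologicalClosure _ ⟨h, h.2, rfl⟩))) = β '' (H : Set G) := by
      ext b
      constructor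
      · rintro ⟨k, ⟨h, rfl⟩, rfl⟩
        exact ⟨h, h.2, rfl⟩
      · rintro ⟨g, hg, rfl⟩
        exact ⟨⟨β g, Subgroup.le_topologicalClosure _ ⟨g, hg, rfl⟩⟩, ⟨⟨g, hg⟩, rfl⟩, rfl⟩
    rw [himg]
    have : (x : B) ∈ closure (↑(H.map β) : Set B) := x.2
    rwa [Subgroup.coe_map] at this
  -- compact
  · exact isCompact_iff_compactSpace.mp hKclosed.isCompact
  -- T2
  · infer_instance
  -- topological group
  · infer_instance
  -- universal property
  · intro C _ _ _ _ _ α hα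
    obtain ⟨α', hα'c, hα'β⟩ := bohr_extension H β ⟨hβc, hβd, ‹_›, ‹_›, ‹_›, huniv⟩
      hfin hclosed α hα
    exact ⟨α', hα'c, MonoidHom.ext fun h => hα'β h⟩
  -- identity components
  · have hKopen : IsOpen (Ksub : Set B) :=
      Subgroup.isOpen_of_isClosed_of_finiteIndex Ksub hKclosed
    have hclopen : IsClopen (Ksub : Set B) := ⟨hKclosed, hKopen⟩
    apply Set.Subset.antisymm
    · apply IsPreconnected.subset_connectedComponent
      · exact isPreconnected_connectedComponent.image _ continuous_subtype_val.continuousOn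
      · exact ⟨1, mem_connectedComponent, rfl⟩
    · have hsub : connectedComponent (1 : B) ⊆ (Ksub : Set B) :=
        hclopen.connectedComponent_subset (one_mem _)
      intro b hb
      refine ⟨⟨b, hsub hb⟩, ?_, rfl⟩
      have hpre : IsPreconnected
          ((Subtype.val : Ksub → B) ⁻¹' connectedComponent (1 : B)) := by
        have himg : (Subtype.val : Ksub → B) '' (Subtype.val ⁻¹' connectedComponent (1 : B))
            = connectedComponent (1 : B) :=
          Set.image_preimage_eq_of_subset (fun x hx => ⟨⟨x, hsub hx⟩, rfl⟩)
        refine (Topology.IsEmbedding.subtypeVal).toIsInducing.isPreconnected_image.mp ?_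
        rw [himg]
        exact isPreconnected_connectedComponent
      exact hpre.subset_connectedComponent (by exact mem_connectedComponent) hb
end

section
/- Let G be a topological group with Bohr compactification (Bohr(G), β), and let N be a closed normal subgroup of G. Let K_N be the closure of β(N) in Bohr(G). Then K_N is a normal subgroup of Bohr(G), β induces a continuous homomorphism ᾱ : G/N → Bohr(G)/K_N, and (Bohr(G)/K_N, ᾱ) is a Bohr compactification of G/N. -/
/-- for a closed normal subgroup `N` of `G`, the closure `K_N` of `β(N)` is normal
in `Bohr(G)`, and the induced map `G/N → Bohr(G)/K_N` is a Bohr compactification of `G/N`. -/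
theorem bohr_of_quotient (G B : Type) [Group G] [TopologicalSpace G] [IsTopologicalGroup G]
    [Group B] [TopologicalSpace B] [IsTopologicalGroup B] [CompactSpace B] [T2Space B]
    (β : G →* B) (hB : IsBohrCompactification G B β)
    (N : Subgroup G) [hN : N.Normal] (hclosed : IsClosed (N : Set G)) :
    ((N.map β).topologicalClosure).Normal ∧
    ∀ hn : ((N.map β).topologicalClosure).Normal,
      haveI := hn
      ∃ f : (G ⧸ N) →* (B ⧸ (N.map β).topologicalClosure),
        Continuous f ∧
        (∀ g : G, f ((g : G ⧸ N)) = ((β g : B) : B ⧸ (N.map β).topologicalClosure)) ∧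
        IsBohrCompactification (G ⧸ N) (B ⧸ (N.map β).topologicalClosure) f := by
  obtain ⟨hβc, hβd, _, _, _, huniv⟩ := hB
  set K : Subgroup B := (N.map β).topologicalClosure with hK
  have hKclosed : IsClosed (K : Set B) := Subgroup.isClosed_topologicalClosure _
  -- conjugation by elements of the dense image preserves K
  have hconj : ∀ b : B, ∀ k ∈ K, b * k * b⁻¹ ∈ K := by
    intro b k hk
    revert b
    have hstep : ∀ g : G, ∀ k ∈ K, β g * k * (β g)⁻¹ ∈ K := by
      intro g k hk
      -- conjugation by β g maps N.map β into itself, hence closure into closure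
      have hmap : (fun x : B => β g * x * (β g)⁻¹) '' (N.map β : Set B) ⊆ (N.map β : Set B) := by
        rintro _ ⟨x, hx, rfl⟩
        obtain ⟨n, hn', rfl⟩ := hx
        exact ⟨g * n * g⁻¹, hN.conj_mem n hn' g, by simp [map_mul]⟩
      have hcont : Continuous (fun x : B => β g * x * (β g)⁻¹) := by continuity
      have := (image_closure_subset_closure_image hcont (s := (N.map β : Set B))).trans
        (closure_mono hmap)
      exact this ⟨k, hk, rfl⟩
    intro b
    have hclosedset : IsClosed {b : B | b * k * b⁻¹ ∈ K} :=
      hKclosed.preimage (by continuity)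
    have hsub : Set.range β ⊆ {b : B | b * k * b⁻¹ ∈ K} := by
      rintro _ ⟨g, rfl⟩; exact hstep g k hk
    have : closure (Set.range β) ⊆ {b : B | b * k * b⁻¹ ∈ K} :=
      hclosedset.closure_subset_iff.mpr hsub
    exact this (hβd.closure_eq ▸ Set.mem_univ b)
  have hKnormal : K.Normal := ⟨fun k hk b => by simpa [mul_assoc] using hconj b k hk⟩
  refine ⟨hKnormal, fun hn => ?_⟩
  have hle : N ≤ K.comap β := fun n hn' =>
    Subgroup.le_topologicalClosure _ (Subgroup.mem_map_of_mem β hn')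
  refine ⟨QuotientGroup.map N K β hle, ?_, fun g => rfl, ?_⟩
  · -- continuity
    exact (QuotientGroup.isQuotientMap_mk N).continuous_iff.mpr
      (QuotientGroup.continuous_mk.comp hβc)
  have hfc : Continuous (QuotientGroup.map N K β hle) :=
    (QuotientGroup.isQuotientMap_mk N).continuous_iff.mpr
      (QuotientGroup.continuous_mk.comp hβc)
  refine ⟨hfc, ?_, inferInstance, inferInstance, inferInstance, ?_⟩
  · -- dense range
    have h1 : DenseRange ((QuotientGroup.map N K β hle) ∘ (QuotientGroup.mk : G → G ⧸ N)) := by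
      have : ((QuotientGroup.map N K β hle) ∘ (QuotientGroup.mk : G → G ⧸ N)) =
          (QuotientGroup.mk : B → B ⧸ K) ∘ β := rfl
      rw [this]
      exact (QuotientGroup.mk_surjective.denseRange).comp hβd QuotientGroup.continuous_mk
    exact h1.mono (Set.range_comp_subset_range _ _)
  · -- universal property
    intro C _ _ _ _ _ α hα
    have hαmk : Continuous (α.comp (QuotientGroup.mk' N)) :=
      hα.comp QuotientGroup.continuous_mk
    obtain ⟨α', hα'c, hα'eq⟩ := huniv C (α.comp (QuotientGroup.mk' N)) hαmk
    have hker : K ≤ α'.ker := by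
      apply Subgroup.topologicalClosure_minimal
      · rintro _ ⟨n, hn', rfl⟩
        have : α' (β n) = α ((n : G ⧸ N)) := DFunLike.congr_fun hα'eq n
        simp only [MonoidHom.mem_ker, this]
        rw [(QuotientGroup.eq_one_iff n).mpr hn', map_one]
      · exact IsClosed.preimage hα'c isClosed_singleton
    refine ⟨QuotientGroup.lift K α' hker, ?_, ?_⟩
    · exact (QuotientGroup.isQuotientMap_mk K).continuous_iff.mpr hα'c
    · ext x
      simpa using DFunLike.congr_fun hα'eq x
end

section
/- Let Γ be a finitely generated group with finite symmetric generating set S, let γ ∈ Γ, let π : Γ → U(N) be a unitary representation, and suppose λ is an eigenvalue of π(γ) and σ an embedding of the field generated by the matrix entries of π(Γ) into a locally compact field k with absolute value |·| such that |σ(λ)| > 1. Then there is a constant C ≥ 1 (the maximum of the operator norms of the matrices σ(π(s)), s ∈ S) such that ℓ_S(γ^n) · log C ≥ n · log|σ(λ)| for all n ∈ ℕ; in particular liminf_n ℓ_S(γ^n)/n > 0. -/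
open Filter Topology Matrix

/-- The word length of `γ` with respect to the generating set `S` (assumed symmetric). -/
noncomputable def wordLength {Γ : Type} [Group Γ] (S : Finset Γ) (γ : Γ) : ℕ :=
  sInf {n : ℕ | ∃ l : List Γ, l.length = n ∧ (∀ x ∈ l, x ∈ S) ∧ l.prod = γ}

/-- if `λ` is an eigenvalue of `π(γ)` and `σ` embeds the field containing the
matrix entries of `π(Γ)` into a locally compact normed field `k` with `|σ(λ)| > 1`, then
taking `C ≥ 1` to be (a bound for) the operator norms of the matrices `σ(π(s))`, `s ∈ S`,
one has `ℓ_S(γ^n)·log C ≥ n·log|σ(λ)|` for all `n`; in particular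
`liminf_n ℓ_S(γ^n)/n > 0`. -/
theorem wordLength_lower_bound_of_eigenvalue {Γ : Type} [Group Γ] (S : Finset Γ)
    (hsym : ∀ s ∈ S, s⁻¹ ∈ S) (hgen : Subgroup.closure (S : Set Γ) = ⊤) (γ : Γ)
    (N : ℕ) (π : Γ →* Matrix.unitaryGroup (Fin N) ℂ)
    (L : Subfield ℂ) (hL : ∀ (g : Γ) (i j : Fin N), ((π g : Matrix (Fin N) (Fin N) ℂ) i j) ∈ L)
    (k : Type) [NormedField k] [LocallyCompactSpace k] (σ : L →+* k)
    (lam : ℂ) (hlam : lam ∈ L)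
    (heig : ∃ v : Fin N → ℂ, v ≠ 0 ∧ (π γ : Matrix (Fin N) (Fin N) ℂ).mulVec v = lam • v)
    (hgt : 1 < ‖σ ⟨lam, hlam⟩‖) :
    ∃ C : ℝ, 1 ≤ C ∧
      (∀ s ∈ S, ∀ ξ : Fin N → k,
        ‖(Matrix.of fun i j : Fin N =>
            σ ⟨(π s : Matrix (Fin N) (Fin N) ℂ) i j, hL s i j⟩).mulVec ξ‖ ≤ C * ‖ξ‖) ∧
      (∀ n : ℕ, (n : ℝ) * Real.log ‖σ ⟨lam, hlam⟩‖ ≤ (wordLength S (γ ^ n) : ℝ) * Real.log C) ∧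
      0 < liminf (fun n : ℕ => (wordLength S (γ ^ n) : ℝ) / n) atTop := by
  classical
  set lam' : L := ⟨lam, hlam⟩ with hlam'
  -- the entrywise lift to L
  set P : Γ → Matrix (Fin N) (Fin N) L :=
    fun g => Matrix.of fun i j => (⟨(π g : Matrix (Fin N) (Fin N) ℂ) i j, hL g i j⟩ : L) with hP
  have hPmul : ∀ g h : Γ, P (g * h) = P g * P h := by
    intro g h
    ext i j
    have : (π (g * h) : Matrix (Fin N) (Fin N) ℂ) =
        (π g : Matrix (Fin N) (Fin N) ℂ) * (π h : Matrix (Fin N) (Fin N) ℂ) := by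
      rw [_root_.map_mul]; rfl
    push_cast [hP, Matrix.mul_apply, this]
    rfl
  have hPone : P 1 = 1 := by
    ext i j
    have : (π (1 : Γ) : Matrix (Fin N) (Fin N) ℂ) = 1 := by rw [_root_.map_one]; rfl
    simp only [hP, Matrix.of_apply, this, Matrix.one_apply]
    split <;> simp
  -- the matrices over k
  set ρ : Γ → Matrix (Fin N) (Fin N) k :=
    fun g => Matrix.of fun i j : Fin N =>
      σ ⟨(π g : Matrix (Fin N) (Fin N) ℂ) i j, hL g i j⟩ with hρ
  have hρmap : ∀ g, ρ g = (P g).map σ := fun g => rfl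
  have hρmul : ∀ g h : Γ, ρ (g * h) = ρ g * ρ h := by
    intro g h
    rw [hρmap, hρmap, hρmap, hPmul, Matrix.map_mul]
  have hρone : ρ 1 = 1 := by
    rw [hρmap, hPone, Matrix.map_one σ (map_zero σ) (map_one σ)]
  have hρprod : ∀ l : List Γ, ρ l.prod = (l.map ρ).prod := by
    intro l
    induction l with
    | nil => simpa using hρone
    | cons a t ih => simp [hρmul, ih]
  -- eigenvector over k
  obtain ⟨v, hv, hvv⟩ := heig
  have hdetC : ((π γ : Matrix (Fin N) (Fin N) ℂ) - lam • 1).det = 0 := by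
    rw [← Matrix.exists_mulVec_eq_zero_iff]
    refine ⟨v, hv, ?_⟩
    rw [Matrix.sub_mulVec, hvv, Matrix.smul_mulVec, Matrix.one_mulVec, sub_self]
  have hdetL : (P γ - lam' • 1).det = 0 := by
    have h2 : ((P γ - lam' • 1).map L.subtype) = (π γ : Matrix (Fin N) (Fin N) ℂ) - lam • 1 := by
      ext i j
      simp [Matrix.map_apply, Matrix.sub_apply, Matrix.smul_apply, Matrix.one_apply, hP]
      split <;> simp [hlam']
    have h0 := L.subtype.map_det (P γ - lam' • 1)
    rw [RingHom.mapMatrix_apply, h2, hdetC] at h0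
    exact Subtype.ext h0
  have hdetk : ((ρ γ) - σ lam' • 1).det = 0 := by
    have h1 : (ρ γ) - σ lam' • 1 = (P γ - lam' • 1).map σ := by
      rw [hρmap]
      rw [Matrix.map_sub _ (_root_.map_sub σ)]
      congr 1
      ext i j
      simp [Matrix.map_apply, Matrix.smul_apply, Matrix.one_apply]
      split <;> simp
    rw [h1, ← RingHom.mapMatrix_apply, ← σ.map_det, hdetL, map_zero]
  obtain ⟨w, hw, hww⟩ := Matrix.exists_mulVec_eq_zero_iff.mpr hdetk
  have hweig : (ρ γ).mulVec w = σ lam' • w := by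
    have := hww
    rw [Matrix.sub_mulVec, Matrix.smul_mulVec, Matrix.one_mulVec, sub_eq_zero] at this
    exact this
  have hpow : ∀ n : ℕ, (ρ (γ ^ n)).mulVec w = (σ lam') ^ n • w := by
    intro n
    induction n with
    | zero => simp [hρone, Matrix.one_mulVec]
    | succ n ih =>
      rw [pow_succ, hρmul, ← Matrix.mulVec_mulVec, hweig, Matrix.mulVec_smul, ih,
        smul_smul, pow_succ]
      ring_nf
  -- norm bounds
  have hwpos : 0 < ‖w‖ := norm_pos_iff.mpr hw
  set Cs : Γ → ℝ := fun s => ∑ i, ∑ j, ‖ρ s i j‖ with hCs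
  have hCs0 : ∀ s, 0 ≤ Cs s := fun s =>
    Finset.sum_nonneg fun i _ => Finset.sum_nonneg fun j _ => norm_nonneg _
  set B : ℝ := ∑ s ∈ S, Cs s with hB
  set C : ℝ := max ‖σ lam'‖ B with hC
  have hC1 : (1 : ℝ) ≤ C := le_trans hgt.le (le_max_left _ _)
  have hC0 : (0 : ℝ) ≤ C := le_trans zero_le_one hC1
  have hbd : ∀ s ∈ S, ∀ ξ : Fin N → k, ‖(ρ s).mulVec ξ‖ ≤ C * ‖ξ‖ := by
    intro s hs ξ
    have hsC : Cs s ≤ C :=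
      le_trans (Finset.single_le_sum (fun t _ => hCs0 t) hs) (le_max_right _ _)
    rw [pi_norm_le_iff_of_nonneg (mul_nonneg hC0 (norm_nonneg _))]
    intro i
    calc ‖(ρ s).mulVec ξ i‖ = ‖∑ j, ρ s i j * ξ j‖ := by
          simp [Matrix.mulVec, dotProduct]
      _ ≤ ∑ j, ‖ρ s i j * ξ j‖ := norm_sum_le _ _
      _ ≤ ∑ j, ‖ρ s i j‖ * ‖ξ‖ := by
          refine Finset.sum_le_sum fun j _ => ?_
          rw [norm_mul]
          exact mul_le_mul_of_nonneg_left (norm_le_pi_norm ξ j) (norm_nonneg _)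
      _ = (∑ j, ‖ρ s i j‖) * ‖ξ‖ := (Finset.sum_mul _ _ _).symm
      _ ≤ Cs s * ‖ξ‖ := by
          refine mul_le_mul_of_nonneg_right ?_ (norm_nonneg _)
          exact Finset.single_le_sum
            (fun i _ => Finset.sum_nonneg fun j _ => norm_nonneg _) (Finset.mem_univ i)
      _ ≤ C * ‖ξ‖ := mul_le_mul_of_nonneg_right hsC (norm_nonneg _)
  have hlist : ∀ l : List Γ, (∀ x ∈ l, x ∈ S) → ∀ ξ : Fin N → k,
      ‖((l.map ρ).prod).mulVec ξ‖ ≤ C ^ l.length * ‖ξ‖ := by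
    intro l
    induction l with
    | nil => intro _ ξ; simp [Matrix.one_mulVec]
    | cons a t ih =>
      intro hmem ξ
      have ha := hmem a (List.mem_cons_self)
      have ht : ∀ x ∈ t, x ∈ S := fun x hx => hmem x (List.mem_cons_of_mem _ hx)
      calc ‖((List.map ρ (a :: t)).prod).mulVec ξ‖
          = ‖(ρ a).mulVec (((t.map ρ).prod).mulVec ξ)‖ := by
            rw [List.map_cons, List.prod_cons, Matrix.mulVec_mulVec]
        _ ≤ C * ‖((t.map ρ).prod).mulVec ξ‖ := hbd a ha _
        _ ≤ C * (C ^ t.length * ‖ξ‖) := mul_le_mul_of_nonneg_left (ih ht ξ) hC0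
        _ = C ^ (a :: t).length * ‖ξ‖ := by rw [List.length_cons]; ring
  -- every element is a product of generators
  have hrep : ∀ g : Γ, ∃ l : List Γ, (∀ x ∈ l, x ∈ S) ∧ l.prod = g := by
    intro g
    have hg : g ∈ Subgroup.closure (S : Set Γ) := hgen ▸ Subgroup.mem_top g
    have hSU : (S : Set Γ) ∪ (S : Set Γ)⁻¹ = (S : Set Γ) := by
      apply Set.union_eq_self_of_subset_right
      intro x hx
      have := hsym x⁻¹ (Set.mem_inv.mp hx)
      rwa [inv_inv] at this
    have hg2 : g ∈ Submonoid.closure ((S : Set Γ) ∪ (S : Set Γ)⁻¹) := by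
      rw [← Subgroup.closure_toSubmonoid]; exact hg
    rw [hSU] at hg2
    obtain ⟨l, h1, h2⟩ := Submonoid.exists_list_of_mem_closure hg2
    exact ⟨l, h1, h2⟩
  have hword : ∀ n : ℕ, ∃ l : List Γ,
      l.length = wordLength S (γ ^ n) ∧ (∀ x ∈ l, x ∈ S) ∧ l.prod = γ ^ n := by
    intro n
    obtain ⟨l, hl1, hl2⟩ := hrep (γ ^ n)
    have hne : {m : ℕ | ∃ l : List Γ,
        l.length = m ∧ (∀ x ∈ l, x ∈ S) ∧ l.prod = γ ^ n}.Nonempty :=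
      ⟨l.length, l, rfl, hl1, hl2⟩
    exact Nat.sInf_mem hne
  have hkey : ∀ n : ℕ, ‖σ lam'‖ ^ n ≤ C ^ (wordLength S (γ ^ n)) := by
    intro n
    obtain ⟨l, hlen, hmem, hprod⟩ := hword n
    have h1 : ‖σ lam'‖ ^ n * ‖w‖ ≤ C ^ l.length * ‖w‖ := by
      calc ‖σ lam'‖ ^ n * ‖w‖ = ‖(σ lam') ^ n • w‖ := by rw [norm_smul, norm_pow]
        _ = ‖(ρ (γ ^ n)).mulVec w‖ := by rw [hpow]
        _ = ‖(((l.map ρ)).prod).mulVec w‖ := by rw [← hρprod, hprod]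
        _ ≤ C ^ l.length * ‖w‖ := hlist l hmem w
    rw [hlen] at h1
    exact le_of_mul_le_mul_right h1 hwpos
  have hlog : ∀ n : ℕ, (n : ℝ) * Real.log ‖σ lam'‖ ≤
      (wordLength S (γ ^ n) : ℝ) * Real.log C := by
    intro n
    have := Real.log_le_log (pow_pos (lt_trans zero_lt_one hgt) n) (hkey n)
    rwa [Real.log_pow, Real.log_pow] at this
  have hlogC : 0 < Real.log C := Real.log_pos (lt_of_lt_of_le hgt (le_max_left _ _))
  have hloglam : 0 < Real.log ‖σ lam'‖ := Real.log_pos hgt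
  refine ⟨C, hC1, hbd, hlog, ?_⟩
  set c : ℝ := Real.log ‖σ lam'‖ / Real.log C with hc
  have hcpos : 0 < c := div_pos hloglam hlogC
  have hev : ∀ᶠ n : ℕ in atTop, c ≤ (wordLength S (γ ^ n) : ℝ) / n := by
    filter_upwards [eventually_ge_atTop 1] with n hn
    have hn0 : (0 : ℝ) < n := by exact_mod_cast hn
    rw [hc, div_le_div_iff₀ hlogC hn0, mul_comm]
    exact hlog n
  obtain ⟨l1, hmem1, hprod1⟩ := hrep γ
  have hsub : ∀ n : ℕ, wordLength S (γ ^ n) ≤ n * l1.length := by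
    intro n
    apply Nat.sInf_le
    refine ⟨(List.replicate n l1).flatten, ?_, ?_, ?_⟩
    · rw [List.length_flatten]
      simp [List.map_replicate, List.sum_replicate, smul_eq_mul]
    · intro x hx
      rw [List.mem_flatten] at hx
      obtain ⟨t, ht, hxt⟩ := hx
      rw [List.mem_replicate] at ht
      exact hmem1 x (ht.2 ▸ hxt)
    · rw [List.prod_flatten, List.map_replicate, List.prod_replicate, hprod1]
  have hub : ∀ n : ℕ, (wordLength S (γ ^ n) : ℝ) / n ≤ (l1.length : ℝ) := by
    intro n
    rcases Nat.eq_zero_or_pos n with h0 | hpos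
    · simp [h0]
    · have hn0 : (0 : ℝ) < n := by exact_mod_cast hpos
      rw [div_le_iff₀ hn0]
      calc (wordLength S (γ ^ n) : ℝ) ≤ (n * l1.length : ℕ) := by exact_mod_cast hsub n
        _ = (l1.length : ℝ) * n := by push_cast; ring
  have hcob : IsCoboundedUnder (· ≥ ·) atTop
      (fun n : ℕ => (wordLength S (γ ^ n) : ℝ) / n) :=
    Filter.isCoboundedUnder_ge_of_le atTop hub
  exact lt_of_lt_of_le hcpos (le_liminf_of_le hcob hev)
end

section
/- Let Γ be a finitely generated nilpotent group. Then every element of the commutator subgroup [Γ, Γ] is distorted: for every finite symmetric generating set S of Γ and every γ ∈ [Γ, Γ], lim_{n→∞} ℓ_S(γ^n)/n = 0. -/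
open Filter Topology

namespace CEDaux

open Subgroup

variable {Γ : Type} [Group Γ]

theorem wordLength_def (S : Finset Γ) (γ : Γ) :
    wordLength S γ = sInf {n : ℕ | ∃ l : List Γ, l.length = n ∧ (∀ x ∈ l, x ∈ S) ∧ l.prod = γ} :=
  rfl

theorem wordLength_le (S : Finset Γ) {γ : Γ} {l : List Γ} (hl : ∀ x ∈ l, x ∈ S)
    (hp : l.prod = γ) : wordLength S γ ≤ l.length := by
  rw [wordLength_def]
  exact Nat.sInf_le ⟨l, rfl, hl, hp⟩

theorem wordLength_one (S : Finset Γ) : wordLength S 1 = 0 :=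
  Nat.le_zero.mp (by simpa using wordLength_le S (l := []) (by simp) (by simp))

section Gen

variable (S : Finset Γ) (hsym : ∀ s ∈ S, s⁻¹ ∈ S)
  (hgen : Subgroup.closure (S : Set Γ) = ⊤)

include hsym hgen

theorem exists_rep (γ : Γ) : ∃ l : List Γ, (∀ x ∈ l, x ∈ S) ∧ l.prod = γ := by
  have hγ : γ ∈ Subgroup.closure (S : Set Γ) := by rw [hgen]; trivial
  induction hγ using Subgroup.closure_induction with
  | mem x hx => exact ⟨[x], by simpa using hx, by simp⟩
  | one => exact ⟨[], by simp, by simp⟩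
  | mul x y hx hy ihx ihy =>
    obtain ⟨l, hl, hlp⟩ := ihx
    obtain ⟨m, hm, hmp⟩ := ihy
    refine ⟨l ++ m, ?_, by simp [hlp, hmp]⟩
    intro x hx'
    rcases List.mem_append.mp hx' with h | h
    · exact hl x h
    · exact hm x h
  | inv x hx ih =>
    obtain ⟨l, hl, hlp⟩ := ih
    refine ⟨(l.map fun a => a⁻¹).reverse, ?_, ?_⟩
    · intro a ha
      rw [List.mem_reverse, List.mem_map] at ha
      obtain ⟨b, hb, rfl⟩ := ha
      exact hsym b (hl b hb)
    · rw [← List.prod_inv_reverse, hlp]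

theorem exists_min_rep (γ : Γ) :
    ∃ l : List Γ, (∀ x ∈ l, x ∈ S) ∧ l.prod = γ ∧ l.length = wordLength S γ := by
  have hne : {n : ℕ | ∃ l : List Γ, l.length = n ∧ (∀ x ∈ l, x ∈ S) ∧ l.prod = γ}.Nonempty := by
    obtain ⟨l, hl, hlp⟩ := exists_rep S hsym hgen γ
    exact ⟨l.length, l, rfl, hl, hlp⟩
  obtain ⟨l, hlen, hl, hp⟩ := Nat.sInf_mem hne
  exact ⟨l, hl, hp, hlen⟩

theorem wordLength_mul_le (a b : Γ) :
    wordLength S (a * b) ≤ wordLength S a + wordLength S b := by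
  obtain ⟨l, hl, hlp, hll⟩ := exists_min_rep S hsym hgen a
  obtain ⟨m, hm, hmp, hml⟩ := exists_min_rep S hsym hgen b
  have := wordLength_le S (l := l ++ m) (γ := a * b) ?_ (by simp [hlp, hmp])
  · simpa [hll, hml] using this
  · intro x hx
    rcases List.mem_append.mp hx with h | h
    · exact hl x h
    · exact hm x h

theorem wordLength_inv_le (a : Γ) : wordLength S a⁻¹ ≤ wordLength S a := by
  obtain ⟨l, hl, hlp, hll⟩ := exists_min_rep S hsym hgen a
  have := wordLength_le S (l := (l.map fun x => x⁻¹).reverse) (γ := a⁻¹) ?_ ?_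
  · simpa [hll] using this
  · intro x hx
    rw [List.mem_reverse, List.mem_map] at hx
    obtain ⟨b, hb, rfl⟩ := hx
    exact hsym b (hl b hb)
  · rw [← List.prod_inv_reverse, hlp]

theorem wordLength_inv (a : Γ) : wordLength S a⁻¹ = wordLength S a :=
  le_antisymm (wordLength_inv_le S hsym hgen a)
    (by simpa using wordLength_inv_le S hsym hgen a⁻¹)

theorem wordLength_pow_le (a : Γ) (k : ℕ) : wordLength S (a ^ k) ≤ k * wordLength S a := by
  induction k with
  | zero => simp [wordLength_one]
  | succ k ih =>
    rw [pow_succ]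
    calc wordLength S (a ^ k * a) ≤ wordLength S (a ^ k) + wordLength S a :=
          wordLength_mul_le S hsym hgen _ _
      _ ≤ k * wordLength S a + wordLength S a := by omega
      _ = (k + 1) * wordLength S a := by ring

theorem wl_subadd (γ : Γ) : Subadditive fun i : ℕ => (wordLength S (γ ^ i) : ℝ) := by
  intro m n
  show (wordLength S (γ ^ (m + n)) : ℝ) ≤ (wordLength S (γ ^ m) : ℝ) + (wordLength S (γ ^ n) : ℝ)
  rw [pow_add]
  exact_mod_cast wordLength_mul_le S hsym hgen (γ ^ m) (γ ^ n)

/-- The stable (translation) length of `γ`. -/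
noncomputable def slim (γ : Γ) : ℝ := (wl_subadd S hsym hgen γ).lim

omit hsym hgen in
theorem wl_bddBelow (γ : Γ) :
    BddBelow (Set.range fun i : ℕ => (wordLength S (γ ^ i) : ℝ) / i) := by
  refine ⟨0, ?_⟩
  rintro x ⟨i, rfl⟩
  positivity

theorem tendsto_slim (γ : Γ) :
    Tendsto (fun i : ℕ => (wordLength S (γ ^ i) : ℝ) / i) atTop (𝓝 (slim S hsym hgen γ)) :=
  (wl_subadd S hsym hgen γ).tendsto_lim (wl_bddBelow S γ)

theorem slim_nonneg (γ : Γ) : 0 ≤ slim S hsym hgen γ :=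
  ge_of_tendsto' (tendsto_slim S hsym hgen γ) fun i => by positivity

theorem slim_le_wordLength (γ : Γ) : slim S hsym hgen γ ≤ wordLength S γ := by
  refine le_of_tendsto' (tendsto_slim S hsym hgen γ) fun i => ?_
  rcases Nat.eq_zero_or_pos i with rfl | hi
  · simp
  · rw [div_le_iff₀ (by exact_mod_cast hi)]
    calc ((wordLength S (γ ^ i) : ℝ)) ≤ (i * wordLength S γ : ℕ) := by
          exact_mod_cast wordLength_pow_le S hsym hgen γ i
      _ = (wordLength S γ : ℝ) * i := by push_cast; ring

theorem slim_mul_le_of_commute {a b : Γ} (h : Commute a b) :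
    slim S hsym hgen (a * b) ≤ slim S hsym hgen a + slim S hsym hgen b := by
  refine le_of_tendsto_of_tendsto' (tendsto_slim S hsym hgen (a * b))
    ((tendsto_slim S hsym hgen a).add (tendsto_slim S hsym hgen b)) fun i => ?_
  rw [h.mul_pow, ← add_div]
  gcongr
  exact_mod_cast wordLength_mul_le S hsym hgen (a ^ i) (b ^ i)

theorem slim_inv (γ : Γ) : slim S hsym hgen γ⁻¹ = slim S hsym hgen γ := by
  refine tendsto_nhds_unique (tendsto_slim S hsym hgen γ⁻¹)
    ((tendsto_slim S hsym hgen γ).congr fun i => ?_)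
  rw [inv_pow, wordLength_inv S hsym hgen]

theorem slim_pow (γ : Γ) {m : ℕ} (hm : 1 ≤ m) :
    slim S hsym hgen (γ ^ m) = m * slim S hsym hgen γ := by
  have hmul : Tendsto (fun i : ℕ => m * i) atTop atTop :=
    tendsto_atTop_mono (fun i => Nat.le_mul_of_pos_left i (by omega)) tendsto_id
  have h0 : Tendsto (fun i : ℕ => (wordLength S (γ ^ (m * i)) : ℝ) / ((m : ℝ) * i))
      atTop (𝓝 (slim S hsym hgen γ)) := by
    simpa [Function.comp_def, Nat.cast_mul] using (tendsto_slim S hsym hgen γ).comp hmul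
  have h1 : Tendsto (fun i : ℕ => (m : ℝ) * ((wordLength S (γ ^ (m * i)) : ℝ) / ((m : ℝ) * i)))
      atTop (𝓝 (m * slim S hsym hgen γ)) := h0.const_mul (m : ℝ)
  refine tendsto_nhds_unique (tendsto_slim S hsym hgen (γ ^ m)) ?_
  refine (h1.congr fun i => ?_)
  rcases Nat.eq_zero_or_pos i with rfl | hi
  · simp
  · have hm' : (m : ℝ) ≠ 0 := by positivity
    have hi' : (i : ℝ) ≠ 0 := by exact_mod_cast hi.ne'
    rw [← pow_mul]
    field_simp

end Gen

theorem central_comm_pow (x y : Γ) (hc : ∀ g : Γ, Commute (x * y * x⁻¹ * y⁻¹) g) (a b : ℕ) :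
    x ^ a * y ^ b * (x ^ a)⁻¹ * (y ^ b)⁻¹ = (x * y * x⁻¹ * y⁻¹) ^ (a * b) := by
  set c := x * y * x⁻¹ * y⁻¹ with hcdef
  have A : ∀ a : ℕ, x ^ a * y * (x ^ a)⁻¹ * y⁻¹ = c ^ a := by
    intro a
    induction a with
    | zero => simp
    | succ a ihA =>
      have h1 : x ^ (a + 1) * y * (x ^ (a + 1))⁻¹ * y⁻¹
          = x * (x ^ a * y * (x ^ a)⁻¹ * y⁻¹) * x⁻¹ * (x * y * x⁻¹ * y⁻¹) := by
        group
      rw [h1, ihA, ← hcdef]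
      have h2 : x * c ^ a = c ^ a * x := ((hc x).pow_left a).eq.symm
      calc x * c ^ a * x⁻¹ * c = c ^ a * x * x⁻¹ * c := by rw [h2]
        _ = c ^ (a + 1) := by group
  induction b with
  | zero => simp
  | succ b ihB =>
    have h1 : x ^ a * y ^ (b + 1) * (x ^ a)⁻¹ * (y ^ (b + 1))⁻¹
        = (x ^ a * y * (x ^ a)⁻¹ * y⁻¹) * (y * (x ^ a * y ^ b * (x ^ a)⁻¹ * (y ^ b)⁻¹) * y⁻¹) := by
      group
    rw [h1, A a, ihB]
    have h2 : y * c ^ (a * b) = c ^ (a * b) * y := ((hc y).pow_left (a * b)).eq.symm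
    calc c ^ a * (y * c ^ (a * b) * y⁻¹) = c ^ a * (c ^ (a * b) * y * y⁻¹) := by rw [h2]
      _ = c ^ (a + a * b) := by rw [mul_inv_cancel_right, ← pow_add]
      _ = c ^ (a * (b + 1)) := by ring_nf

section Gen2

variable (S : Finset Γ) (hsym : ∀ s ∈ S, s⁻¹ ∈ S)
  (hgen : Subgroup.closure (S : Set Γ) = ⊤)

theorem slim_central_commutator (x y : Γ) (hc : ∀ g : Γ, Commute (x * y * x⁻¹ * y⁻¹) g) :
    slim S hsym hgen (x * y * x⁻¹ * y⁻¹) = 0 := by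
  set c := x * y * x⁻¹ * y⁻¹ with hcdef
  have hsq : Tendsto (fun k : ℕ => k * k) atTop atTop := by
    refine tendsto_atTop_mono (fun k => ?_) tendsto_id
    rcases Nat.eq_zero_or_pos k with rfl | h
    · simp
    · exact Nat.le_mul_of_pos_left k h
  have t1 : Tendsto (fun k : ℕ => (wordLength S (c ^ (k * k)) : ℝ) / ((k : ℝ) * k))
      atTop (𝓝 (slim S hsym hgen c)) := by
    simpa [Function.comp_def, Nat.cast_mul] using (tendsto_slim S hsym hgen c).comp hsq
  have t2 : Tendsto (fun k : ℕ => (2 * ((wordLength S x : ℝ) + (wordLength S y : ℝ))) / k)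
      atTop (𝓝 0) := tendsto_const_div_atTop_nhds_zero_nat _
  refine le_antisymm ?_ (slim_nonneg S hsym hgen c)
  refine le_of_tendsto_of_tendsto' t1 t2 fun k => ?_
  rcases Nat.eq_zero_or_pos k with rfl | hk
  · simp
  · have hkey : wordLength S (c ^ (k * k))
        ≤ 2 * (k * wordLength S x) + 2 * (k * wordLength S y) := by
      rw [← central_comm_pow x y hc k k]
      have h1 := wordLength_mul_le S hsym hgen (x ^ k * y ^ k * (x ^ k)⁻¹) ((y ^ k)⁻¹)
      have h2 := wordLength_mul_le S hsym hgen (x ^ k * y ^ k) ((x ^ k)⁻¹)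
      have h3 := wordLength_mul_le S hsym hgen (x ^ k) (y ^ k)
      have h4 := wordLength_inv S hsym hgen (x ^ k)
      have h5 := wordLength_inv S hsym hgen (y ^ k)
      have h6 := wordLength_pow_le S hsym hgen x k
      have h7 := wordLength_pow_le S hsym hgen y k
      linarith
    have hk' : (0 : ℝ) < k := by exact_mod_cast hk
    rw [div_le_div_iff₀ (by positivity) hk']
    have hcast : ((wordLength S (c ^ (k * k)) : ℕ) : ℝ)
        ≤ ((2 * (k * wordLength S x) + 2 * (k * wordLength S y) : ℕ) : ℝ) :=
      Nat.cast_le.mpr hkey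
    push_cast at hcast
    nlinarith [hcast, (by positivity : (0:ℝ) ≤ (wordLength S x : ℝ)),
      (by positivity : (0:ℝ) ≤ (wordLength S y : ℝ)), hk']

end Gen2

theorem tendsto_of_one (S : Finset Γ) :
    Tendsto (fun m : ℕ => (wordLength S ((1 : Γ) ^ m) : ℝ) / m) atTop (𝓝 0) := by
  have h : ∀ m : ℕ, (wordLength S ((1 : Γ) ^ m) : ℝ) / m = 0 := fun m => by
    rw [one_pow, wordLength_one]; simp
  exact tendsto_const_nhds.congr fun m => (h m).symm

theorem lift_list {Γ' : Type} [Group Γ'] (π : Γ →* Γ') (S : Finset Γ) :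
    ∀ l' : List Γ', (∀ x ∈ l', ∃ s ∈ S, π s = x) →
      ∃ l : List Γ, (∀ x ∈ l, x ∈ S) ∧ l.length = l'.length ∧ π l.prod = l'.prod := by
  intro l'
  induction l' with
  | nil => intro _; exact ⟨[], by simp, by simp, by simp⟩
  | cons a t iht =>
    intro h
    obtain ⟨s, hs, hsa⟩ := h a List.mem_cons_self
    obtain ⟨l, h1, h2, h3⟩ := iht fun x hx => h x (List.mem_cons_of_mem a hx)
    refine ⟨s :: l, ?_, by simp [h2], by simp [map_mul, h3, hsa]⟩
    intro x hx
    rcases List.mem_cons.mp hx with rfl | hx'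
    · exact hs
    · exact h1 x hx'

end CEDaux

namespace CEDaux

open scoped commutatorElement in
theorem aux : ∀ (n : ℕ) (Γ : Type) [Group Γ], (⊤ : Subgroup Γ).lowerCentralSeries n = ⊥ →
    ∀ (S : Finset Γ), (∀ s ∈ S, s⁻¹ ∈ S) → (Subgroup.closure (S : Set Γ) = ⊤) →
    ∀ γ ∈ commutator Γ,
      Tendsto (fun m : ℕ => (wordLength S (γ ^ m) : ℝ) / m) atTop (𝓝 0) := by
  intro n
  induction n with
  | zero =>
    intro Γ _ hbot S hsym hgen γ hγ
    have h1 : γ = 1 := by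
      have hγ' : γ ∈ (⊤ : Subgroup Γ).lowerCentralSeries 0 := by rw [Subgroup.lowerCentralSeries_zero]; trivial
      rw [hbot] at hγ'
      exact Subgroup.mem_bot.mp hγ'
    subst h1
    exact tendsto_of_one S
  | succ n ih =>
    intro Γ _ hbot S hsym hgen γ hγ
    rcases Nat.eq_zero_or_pos n with rfl | hn
    · have h1 : γ = 1 := by
        rw [Subgroup.top_lowerCentralSeries_one] at hbot
        rw [hbot] at hγ
        exact Subgroup.mem_bot.mp hγ
      subst h1
      exact tendsto_of_one S
    obtain ⟨k, rfl⟩ : ∃ k, n = k + 1 := ⟨n - 1, by omega⟩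
    set Z := (⊤ : Subgroup Γ).lowerCentralSeries (k + 1) with hZdef
    have hZc : ∀ z ∈ Z, ∀ g : Γ, Commute z g := by
      intro z hz g
      have h1 : ⁅z, g⁆ ∈ (⊤ : Subgroup Γ).lowerCentralSeries (k + 2) :=
        Subgroup.commutator_mem_commutator hz (Subgroup.mem_top g)
      rw [hbot] at h1
      exact commutatorElement_eq_one_iff_commute.mp (Subgroup.mem_bot.mp h1)
    have hslimZ : ∀ z ∈ Z, slim S hsym hgen z = 0 := by
      intro z hz
      rw [hZdef, Subgroup.mem_lowerCentralSeries_succ_iff] at hz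
      induction hz using Subgroup.closure_induction with
      | mem w hw =>
        obtain ⟨p, hp, q, -, rfl⟩ := hw
        refine slim_central_commutator S hsym hgen p q fun g => hZc _ ?_ g
        show ⁅p, q⁆ ∈ Z
        exact Subgroup.commutator_mem_commutator hp (Subgroup.mem_top q)
      | one =>
        refine le_antisymm ?_ (slim_nonneg S hsym hgen 1)
        have h1 := slim_le_wordLength S hsym hgen (1 : Γ)
        rwa [wordLength_one, Nat.cast_zero] at h1
      | mul a b ha hb iha ihb =>
        have haZ : a ∈ Z := by rw [hZdef, Subgroup.mem_lowerCentralSeries_succ_iff]; exact ha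
        have h1 := slim_mul_le_of_commute S hsym hgen (hZc a haZ b)
        refine le_antisymm ?_ (slim_nonneg S hsym hgen (a * b))
        rw [iha, ihb] at h1
        linarith
      | inv a ha iha =>
        rw [slim_inv S hsym hgen a]
        exact iha
    haveI hZn : Z.Normal := by rw [hZdef]; infer_instance
    letI := Classical.decEq (Γ ⧸ Z)
    set π : Γ →* Γ ⧸ Z := QuotientGroup.mk' Z with hπdef
    have hπs : Function.Surjective π := QuotientGroup.mk'_surjective Z
    have htop : Subgroup.map π (⊤ : Subgroup Γ) = ⊤ := by
      rw [← MonoidHom.range_eq_map]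
      exact MonoidHom.range_eq_top.mpr hπs
    set S' : Finset (Γ ⧸ Z) := S.image π with hS'def
    have hS'mem : ∀ x, x ∈ S' ↔ ∃ s ∈ S, π s = x := by
      intro x
      simp [hS'def, Finset.mem_image]
    have hsym' : ∀ s ∈ S', s⁻¹ ∈ S' := by
      intro s hs
      obtain ⟨a, ha, rfl⟩ := (hS'mem s).mp hs
      refine (hS'mem _).mpr ⟨a⁻¹, hsym a ha, by simp⟩
    have hgen' : Subgroup.closure (S' : Set (Γ ⧸ Z)) = ⊤ := by
      have hco : (S' : Set (Γ ⧸ Z)) = π '' S := by rw [hS'def, Finset.coe_image]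
      rw [hco, ← MonoidHom.map_closure, hgen]
      exact htop
    have hmap : ∀ j, Subgroup.map π ((⊤ : Subgroup Γ).lowerCentralSeries j) = (⊤ : Subgroup (Γ ⧸ Z)).lowerCentralSeries j := by
      intro j
      induction j with
      | zero =>
        simp only [Subgroup.lowerCentralSeries_zero]
        exact htop
      | succ j ihj =>
        show Subgroup.map π ⁅(⊤ : Subgroup Γ).lowerCentralSeries j, ⊤⁆ = ⁅(⊤ : Subgroup (Γ ⧸ Z)).lowerCentralSeries j, ⊤⁆
        rw [Subgroup.map_commutator, ihj, htop]
    have hbot' : (⊤ : Subgroup (Γ ⧸ Z)).lowerCentralSeries (k + 1) = ⊥ := by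
      rw [← hmap (k + 1), eq_bot_iff]
      rintro x ⟨z, hz, rfl⟩
      rw [Subgroup.mem_bot]
      exact (QuotientGroup.eq_one_iff z).mpr hz
    have hγ' : π γ ∈ commutator (Γ ⧸ Z) := by
      have h1 : π γ ∈ Subgroup.map π (commutator Γ) := Subgroup.mem_map_of_mem π hγ
      rw [commutator_def, Subgroup.map_commutator, htop] at h1
      rwa [commutator_def]
    have IH := ih (Γ ⧸ Z) hbot' S' hsym' hgen' (π γ) hγ'
    have key : ∀ ε : ℝ, 0 < ε → slim S hsym hgen γ < ε := by
      intro ε hε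
      obtain ⟨m, hmε, hm1⟩ := ((IH.eventually (gt_mem_nhds hε)).and (eventually_ge_atTop 1)).exists
      obtain ⟨l', hl'S, hl'p, hl'len⟩ := exists_min_rep S' hsym' hgen' ((π γ) ^ m)
      obtain ⟨l, hlS, hllen, hlp⟩ := lift_list π S l' fun x hx => (hS'mem x).mp (hl'S x hx)
      set w := l.prod with hwdef
      set z := w⁻¹ * γ ^ m with hzdef
      have hzZ : z ∈ Z := by
        have hπz : π z = 1 := by
          rw [hzdef, map_mul, map_inv, hlp, hl'p, map_pow]
          simp
        exact (QuotientGroup.eq_one_iff z).mp hπz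
      have hγm : γ ^ m = w * z := by rw [hzdef]; group
      have hm0 : (0 : ℝ) < m := by exact_mod_cast hm1
      have e1 : (m : ℝ) * slim S hsym hgen γ = slim S hsym hgen (γ ^ m) :=
        (slim_pow S hsym hgen γ hm1).symm
      have e2 : slim S hsym hgen (γ ^ m) ≤ slim S hsym hgen w + slim S hsym hgen z := by
        rw [hγm]
        exact slim_mul_le_of_commute S hsym hgen ((hZc z hzZ w).symm)
      have e3 : slim S hsym hgen z = 0 := hslimZ z hzZ
      have e4 : slim S hsym hgen w ≤ (wordLength S w : ℝ) := slim_le_wordLength S hsym hgen w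
      have e5 : wordLength S w ≤ l.length := wordLength_le S hlS hwdef.symm
      have e6 : (wordLength S' ((π γ) ^ m) : ℝ) < ε * m := by
        rw [div_lt_iff₀ hm0] at hmε
        exact hmε
      have hfin : (m : ℝ) * slim S hsym hgen γ < ε * m := by
        calc (m : ℝ) * slim S hsym hgen γ = slim S hsym hgen (γ ^ m) := e1
          _ ≤ slim S hsym hgen w + slim S hsym hgen z := e2
          _ = slim S hsym hgen w := by rw [e3, add_zero]
          _ ≤ (wordLength S w : ℝ) := e4
          _ ≤ (l.length : ℝ) := by exact_mod_cast e5
          _ = (l'.length : ℝ) := by rw [hllen]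
          _ = (wordLength S' ((π γ) ^ m) : ℝ) := by rw [hl'len]
          _ < ε * m := e6
      have hfin' : (m : ℝ) * slim S hsym hgen γ < (m : ℝ) * ε := by linarith
      exact (mul_lt_mul_iff_right₀ hm0).mp hfin'
    have h0 : slim S hsym hgen γ = 0 := by
      refine le_antisymm ?_ (slim_nonneg S hsym hgen γ)
      by_contra h
      push_neg at h
      exact lt_irrefl _ (key _ h)
    have hfin := tendsto_slim S hsym hgen γ
    rwa [h0] at hfin

end CEDaux

/-- in a finitely generated nilpotent group, every element of the commutator
subgroup is distorted. -/
theorem commutator_elements_distorted {Γ : Type} [Group Γ] [Group.IsNilpotent Γ]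
    (S : Finset Γ) (hsym : ∀ s ∈ S, s⁻¹ ∈ S) (hgen : Subgroup.closure (S : Set Γ) = ⊤) :
    ∀ γ ∈ commutator Γ,
      Tendsto (fun n : ℕ => (wordLength S (γ ^ n) : ℝ) / n) atTop (𝓝 0) := by
  obtain ⟨n, hbot⟩ := Subgroup.nilpotent_iff_lowerCentralSeries.mp (inferInstance : Group.IsNilpotent Γ)
  intro γ hγ
  exact CEDaux.aux n Γ hbot S hsym hgen γ hγ
end

section
/- Let Γ be a finitely generated nilpotent group and π : Γ → U(N) a finite-dimensional unitary representation. Then π([Γ, Γ]) is a finite subgroup of U(N). -/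
open Subgroup
open scoped commutatorElement IsMulCommutative

private lemma commutator_pow_left_of_central' {G : Type*} [Group G] (z h : G)
    (hc : ∀ x : G, Commute ⁅z, h⁆ x) : ∀ n : ℕ, ⁅z ^ n, h⁆ = ⁅z, h⁆ ^ n := by
  intro n
  induction n with
  | zero => simp
  | succ n ih =>
    have h1 : ⁅z ^ (n + 1), h⁆ = z * ⁅z ^ n, h⁆ * z⁻¹ * ⁅z, h⁆ := by
      simp only [commutatorElement_def]
      group
    rw [h1, ih, mul_assoc z, ((hc z⁻¹).pow_left n).eq]
    rw [mul_inv_cancel_left, ← pow_succ]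

/-- key step: if `z` maps to a central element of `G ⧸ center G` and all central commutators
have order dividing `e`, then `z ^ e` is central. -/
private lemma pow_mem_center_aux {G : Type*} [Group G] (e : ℕ)
    (hyp : ∀ z : G, z ∈ center G → z ∈ commutator G → z ^ e = 1)
    (z : G) (hz : ∀ h : G, ⁅z, h⁆ ∈ center G) : z ^ e ∈ center G := by
  rw [Subgroup.mem_center_iff]
  intro h
  have hcomm : ∀ x : G, Commute ⁅z, h⁆ x := fun x =>
    ((Subgroup.mem_center_iff.mp (hz h)) x).symm
  have h1 : ⁅z ^ e, h⁆ = ⁅z, h⁆ ^ e := commutator_pow_left_of_central' z h hcomm e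
  have h2 : ⁅z, h⁆ ∈ commutator G :=
    Subgroup.commutator_mem_commutator (Subgroup.mem_top z) (Subgroup.mem_top h)
  have h3 : ⁅z ^ e, h⁆ = 1 := by rw [h1, hyp _ (hz h) h2]
  exact (commutatorElement_eq_one_iff_mul_comm.mp h3).symm

private theorem exists_pow_mem_center {G : Type*} [Group G] [Group.IsNilpotent G] (e : ℕ)
    (he : 0 < e)
    (hyp : ∀ z : G, z ∈ center G → z ∈ commutator G → z ^ e = 1) :
    ∀ g : G, ∃ m : ℕ, 0 < m ∧ g ^ m ∈ center G := by
  revert he hyp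
  refine nilpotent_center_quotient_ind
    (P := fun G _ _ => 0 < e → (∀ z : G, z ∈ center G → z ∈ commutator G → z ^ e = 1) →
      ∀ g : G, ∃ m : ℕ, 0 < m ∧ g ^ m ∈ center G) G ?_ ?_
  · intro G _ _ _ _ g
    exact ⟨1, one_pos, Subgroup.mem_center_iff.mpr fun h => Subsingleton.elim _ _⟩
  · intro G _ _ ih he hyp g
    -- transfer hypothesis to the quotient
    set Q := G ⧸ center G
    have hypQ : ∀ z : Q, z ∈ center Q → z ∈ commutator Q → z ^ e = 1 := by
      intro zq hzq hzq'
      -- lift zq to an element of commutator G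
      have : zq ∈ Subgroup.map (QuotientGroup.mk' (center G)) (commutator G) := by
        rw [_root_.commutator_def] at hzq' ⊢
        rw [Subgroup.map_commutator,
          Subgroup.map_top_of_surjective _ (QuotientGroup.mk'_surjective _)]
        exact hzq'
      obtain ⟨w, hw, rfl⟩ := this
      have hcen : ∀ h : G, ⁅w, h⁆ ∈ center G := by
        intro h
        have : (QuotientGroup.mk' (center G)) ⁅w, h⁆ = 1 := by
          rw [map_commutatorElement]
          exact commutatorElement_eq_one_iff_mul_comm.mpr
            ((Subgroup.mem_center_iff.mp hzq _).symm)
        rwa [← MonoidHom.mem_ker, QuotientGroup.ker_mk'] at this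
      have : w ^ e ∈ center G := pow_mem_center_aux e hyp w hcen
      rw [← map_pow, ← MonoidHom.mem_ker, QuotientGroup.ker_mk']
      exact this
    obtain ⟨m, hm, hgm⟩ := ih he hypQ (QuotientGroup.mk' (center G) g)
    refine ⟨m * e, Nat.mul_pos hm he, ?_⟩
    have hcen : ∀ h : G, ⁅g ^ m, h⁆ ∈ center G := by
      intro h
      have : (QuotientGroup.mk' (center G)) ⁅g ^ m, h⁆ = 1 := by
        rw [map_commutatorElement, map_pow]
        exact commutatorElement_eq_one_iff_mul_comm.mpr
          ((Subgroup.mem_center_iff.mp hgm _).symm)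
      rwa [← MonoidHom.mem_ker, QuotientGroup.ker_mk'] at this
    rw [pow_mul]
    exact pow_mem_center_aux e hyp (g ^ m) hcen

/-- a subgroup of a finitely generated commutative group is finitely generated. -/
private theorem fg_subgroup_of_comm {A : Type*} [CommGroup A] [Group.FG A]
    (B : Subgroup A) : Group.FG B := by
  have h1 : AddGroup.FG (Additive A) := AddGroup.fg_of_group_fg
  have h2 : Module.Finite ℤ (Additive A) := Module.Finite.iff_addGroup_fg.mpr h1
  have h3 : IsNoetherian ℤ (Additive A) := isNoetherian_of_isNoetherianRing_of_finite ℤ _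
  have h4 : (AddSubgroup.toIntSubmodule (Subgroup.toAddSubgroup B)).FG :=
    IsNoetherian.noetherian _
  have h5 : (Subgroup.toAddSubgroup B).FG :=
    (Submodule.fg_iff_addSubgroup_fg _).mp h4
  have h6 : B.FG := (Subgroup.fg_iff_add_fg B).mpr h5
  exact (Group.fg_iff_subgroup_fg B).mpr h6

/-- a finitely generated nilpotent torsion group is finite. -/
private theorem finite_of_fg_nilpotent_torsion :
    ∀ (G : Type) [Group G] [Group.IsNilpotent G], Group.FG G → Monoid.IsTorsion G → Finite G := by
  intro G _ _
  refine nilpotent_center_quotient_ind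
    (P := fun G _ _ => Group.FG G → Monoid.IsTorsion G → Finite G) G ?_ ?_
  · intro G _ _ _ _; exact Finite.of_subsingleton
  · intro G _ _ ih hfg htor
    have hQfg : Group.FG (G ⧸ center G) := QuotientGroup.fg _
    have hQtor : Monoid.IsTorsion (G ⧸ center G) :=
      IsTorsion.of_surjective (QuotientGroup.mk'_surjective (center G)) htor
    have hQfin : Finite (G ⧸ center G) := ih hQfg hQtor
    have hidx : (center G).FiniteIndex := by
      constructor
      have : Nat.card (G ⧸ center G) ≠ 0 := Nat.card_ne_zero.mpr ⟨inferInstance, hQfin⟩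
      exact this
    have hcfg : Group.FG (center G) := Subgroup.fg_of_index_ne_zero _
    have hcfin : Finite (center G) :=
      CommGroup.finite_of_fg_torsion _ (IsTorsion.subgroup htor _)
    exact Finite.of_subgroup_quotient (center G)


private lemma toEuclideanLin_mul {N : ℕ} (B C : Matrix (Fin N) (Fin N) ℂ) :
    Matrix.toEuclideanLin (B * C) =
      Matrix.toEuclideanLin B ∘ₗ Matrix.toEuclideanLin C := by
  apply LinearMap.ext
  intro v
  simp [Matrix.toEuclideanLin_apply, Matrix.mulVec_mulVec]

private lemma toEuclideanLin_one {N : ℕ} :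
    Matrix.toEuclideanLin (1 : Matrix (Fin N) (Fin N) ℂ) = LinearMap.id := by
  apply LinearMap.ext
  intro v
  simp [Matrix.toEuclideanLin_apply]

private lemma toEuclideanLin_pow {N : ℕ} (A : Matrix (Fin N) (Fin N) ℂ) (k : ℕ) :
    Matrix.toEuclideanLin (A ^ k) = (Matrix.toEuclideanLin A) ^ k := by
  induction k with
  | zero => rw [pow_zero, pow_zero, toEuclideanLin_one]; rfl
  | succ k ih =>
    rw [pow_succ, pow_succ, toEuclideanLin_mul, ih]
    rfl

local notation "⟪" x ", " y "⟫" => @inner ℂ _ _ x y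

private lemma ker_sq {N : ℕ} (g : Module.End ℂ (EuclideanSpace ℂ (Fin N)))
    (hg : LinearMap.adjoint g ∘ₗ g = g ∘ₗ LinearMap.adjoint g) (v : EuclideanSpace ℂ (Fin N))
    (hv : g (g v) = 0) : g v = 0 := by
  have h1 : LinearMap.adjoint g (g (g v)) = 0 := by rw [hv]; simp
  have h2 : ⟪LinearMap.adjoint g (g v), LinearMap.adjoint g (g v)⟫ = 0 := by
    rw [LinearMap.adjoint_inner_left]
    have : g (LinearMap.adjoint g (g v)) = LinearMap.adjoint g (g (g v)) := by
      have := congrArg (fun h : Module.End ℂ (EuclideanSpace ℂ (Fin N)) => h (g v)) hg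
      simpa using this.symm
    rw [this, h1, inner_zero_right]
  have h3 : LinearMap.adjoint g (g v) = 0 := inner_self_eq_zero.mp h2
  have h4 : ⟪g v, g v⟫ = 0 := by
    rw [← LinearMap.adjoint_inner_right, h3, inner_zero_right]
  exact inner_self_eq_zero.mp h4

private lemma unitary_pow_eq_one_of_eigenvalues {N : ℕ} (K : ℕ)
    (A : Matrix (Fin N) (Fin N) ℂ) (hA : A ∈ Matrix.unitaryGroup (Fin N) ℂ)
    (hev : ∀ μ : ℂ, Module.End.HasEigenvalue (Matrix.toEuclideanLin A) μ → μ ^ K = 1) :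
    A ^ K = 1 := by
  classical
  set f : Module.End ℂ (EuclideanSpace ℂ (Fin N)) := Matrix.toEuclideanLin A with hf
  have hadj : LinearMap.adjoint f = Matrix.toEuclideanLin (star A) :=
    (Matrix.toEuclideanLin_conjTranspose_eq_adjoint A).symm
  have hsl : Matrix.toEuclideanLin (star A) ∘ₗ f = LinearMap.id := by
    rw [hf, ← toEuclideanLin_mul, (Matrix.mem_unitaryGroup_iff'.mp hA), toEuclideanLin_one]
  have hsr : f ∘ₗ Matrix.toEuclideanLin (star A) = LinearMap.id := by
    rw [hf, ← toEuclideanLin_mul, (Matrix.mem_unitaryGroup_iff.mp hA), toEuclideanLin_one]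
  have key : ∀ (μ : ℂ) (v : EuclideanSpace ℂ (Fin N)),
      v ∈ f.maxGenEigenspace μ → f v = μ • v := by
    intro μ v hv
    rw [Module.End.mem_maxGenEigenspace] at hv
    obtain ⟨k, hk⟩ := hv
    set g : Module.End ℂ (EuclideanSpace ℂ (Fin N)) := f - μ • 1 with hg
    have hadj1 : LinearMap.adjoint (1 : Module.End ℂ (EuclideanSpace ℂ (Fin N))) = 1 := by
      rw [← LinearMap.star_eq_adjoint, star_one]
    have hgadj : LinearMap.adjoint g
        = Matrix.toEuclideanLin (star A) - (starRingEnd ℂ μ) • 1 := by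
      rw [hg, map_sub, hadj, map_smulₛₗ, hadj1]
    have hnormal : LinearMap.adjoint g ∘ₗ g = g ∘ₗ LinearMap.adjoint g := by
      rw [hgadj, hg]
      have h1 : Matrix.toEuclideanLin (star A) ∘ₗ f = f ∘ₗ Matrix.toEuclideanLin (star A) := by
        rw [hsl, hsr]
      simp only [LinearMap.sub_comp, LinearMap.comp_sub, LinearMap.smul_comp,
        LinearMap.comp_smul, Module.End.one_eq_id, LinearMap.comp_id, LinearMap.id_comp, h1]
      module
    have hker : ∀ (k : ℕ), k ≠ 0 → ∀ w, (g ^ k) w = 0 → g w = 0 := by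
      intro k
      induction k with
      | zero => intro h; exact absurd rfl h
      | succ k ih =>
        intro _ w hw
        rcases Nat.eq_zero_or_pos k with rfl | hkpos
        · simpa using hw
        · have h1 : (g ^ (k + 1)) w = (g ^ k) (g w) := by rw [pow_succ]; rfl
          have hgw : (g ^ k) (g w) = 0 := by rw [← h1, hw]
          exact ker_sq g hnormal w (ih hkpos.ne' (g w) hgw)
    have hgv : g v = 0 := by
      rcases Nat.eq_zero_or_pos k with rfl | hkpos
      · have hv0 : v = 0 := by simpa using hk
        simp [hv0]
      · exact hker k hkpos.ne' v hk
    have : f v - μ • v = 0 := by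
      simpa [hg, LinearMap.sub_apply] using hgv
    rw [← sub_eq_zero]
    exact this
  have hle : ∀ μ : ℂ, f.maxGenEigenspace μ ≤ LinearMap.ker (f ^ K - 1) := by
    intro μ v hv
    have hfv : f v = μ • v := key μ v hv
    by_cases hv0 : v = 0
    · simp [hv0]
    · have hμ : μ ^ K = 1 := hev μ
        (Module.End.hasEigenvalue_of_hasEigenvector
          ⟨Module.End.mem_eigenspace_iff.mpr hfv, hv0⟩)
      have hpow : ∀ n : ℕ, (f ^ n) v = μ ^ n • v := by
        intro n
        induction n with
        | zero => simp
        | succ n ih =>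
          have h1 : (f ^ (n + 1)) v = (f ^ n) (f v) := by rw [pow_succ]; rfl
          rw [h1, hfv, map_smul, ih, smul_smul, pow_succ]
          ring_nf
      rw [LinearMap.mem_ker, LinearMap.sub_apply, hpow K, hμ, one_smul,
        Module.End.one_apply, sub_self]
  have hzero : f ^ K - 1 = 0 := by
    apply LinearMap.ext
    intro v
    have hv : v ∈ ⨆ μ : ℂ, f.maxGenEigenspace μ := by
      rw [Module.End.iSup_maxGenEigenspace_eq_top f]
      trivial
    have := (iSup_le hle) hv
    simpa using this
  have : Matrix.toEuclideanLin (A ^ K) = Matrix.toEuclideanLin (1 : Matrix (Fin N) (Fin N) ℂ) := by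
    rw [toEuclideanLin_pow, toEuclideanLin_one, ← hf]
    rw [sub_eq_zero] at hzero
    rw [hzero]
    rfl
  exact Matrix.toEuclideanLin.injective this

private theorem eigenvalue_root_of_unity {N : ℕ}
    (K : Subgroup (Matrix.unitaryGroup (Fin N) ℂ)) (z : ↥K)
    (hzc : z ∈ center K) (hzd : z ∈ _root_.commutator ↥K) (μ : ℂ)
    (hμ : Module.End.HasEigenvalue
      (Matrix.toEuclideanLin ((z : Matrix.unitaryGroup (Fin N) ℂ) : Matrix (Fin N) (Fin N) ℂ)) μ) :
    μ ^ (Nat.factorial N) = 1 := by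
  classical
  set Mu := Matrix.unitaryGroup (Fin N) ℂ
  set mat : ↥K → Matrix (Fin N) (Fin N) ℂ := fun g => ((g : Mu) : Matrix (Fin N) (Fin N) ℂ)
    with hmat
  set Z : Matrix (Fin N) (Fin N) ℂ := mat z with hZ
  set E : Submodule ℂ (EuclideanSpace ℂ (Fin N)) :=
    Module.End.eigenspace (Matrix.toEuclideanLin Z) μ with hE
  have hmatmul : ∀ g h : ↥K, mat (g * h) = mat g * mat h := fun g h => rfl
  have hmatone : mat 1 = 1 := rfl
  -- each `g ∈ K` preserves `E`
  have hcomm : ∀ g : ↥K, mat g * Z = Z * mat g := by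
    intro g
    have := Subgroup.mem_center_iff.mp hzc g
    have h2 : (g : Mu) * (z : Mu) = (z : Mu) * (g : Mu) := congrArg (Subtype.val) this
    exact congrArg Subtype.val h2
  have hinv : ∀ g : ↥K, Set.MapsTo (Matrix.toEuclideanLin (mat g)) E E := by
    intro g v hv
    have hv' : Matrix.toEuclideanLin Z v = μ • v := Module.End.mem_eigenspace_iff.mp hv
    have : Matrix.toEuclideanLin Z (Matrix.toEuclideanLin (mat g) v)
        = μ • (Matrix.toEuclideanLin (mat g) v) := by
      calc Matrix.toEuclideanLin Z (Matrix.toEuclideanLin (mat g) v)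
          = Matrix.toEuclideanLin (Z * mat g) v := by rw [toEuclideanLin_mul]; rfl
        _ = Matrix.toEuclideanLin (mat g * Z) v := by rw [hcomm]
        _ = Matrix.toEuclideanLin (mat g) (Matrix.toEuclideanLin Z v) := by
            rw [toEuclideanLin_mul]; rfl
        _ = μ • (Matrix.toEuclideanLin (mat g) v) := by rw [hv', map_smul]
    exact Module.End.mem_eigenspace_iff.mpr this
  -- the determinant of the restriction to `E` is a homomorphism killing commutators
  set δ : ↥K →* ℂ :=
    { toFun := fun g => LinearMap.det ((Matrix.toEuclideanLin (mat g)).restrict (hinv g))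
      map_one' := by
        have : (Matrix.toEuclideanLin (mat 1)).restrict (hinv 1) = LinearMap.id := by
          apply LinearMap.ext
          intro v
          apply Subtype.ext
          simp [LinearMap.restrict_apply, hmatone, toEuclideanLin_one]
        show LinearMap.det ((Matrix.toEuclideanLin (mat 1)).restrict (hinv 1)) = 1
        rw [this]
        simp
      map_mul' := by
        intro g h
        have h1 : Matrix.toEuclideanLin (mat (g * h))
            = Matrix.toEuclideanLin (mat g) ∘ₗ Matrix.toEuclideanLin (mat h) := by
          rw [hmatmul, toEuclideanLin_mul]
        have h2 : (Matrix.toEuclideanLin (mat (g * h))).restrict (hinv (g * h))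
            = ((Matrix.toEuclideanLin (mat g)).restrict (hinv g)) ∘ₗ
              ((Matrix.toEuclideanLin (mat h)).restrict (hinv h)) := by
          apply LinearMap.ext
          intro v
          apply Subtype.ext
          simp only [LinearMap.restrict_apply, LinearMap.coe_comp, Function.comp_apply, h1]
          rfl
        show LinearMap.det ((Matrix.toEuclideanLin (mat (g * h))).restrict (hinv (g * h))) = _
        rw [h2, LinearMap.det_comp] } with hδ
  have hδcomm : ∀ x : ↥K, x ∈ _root_.commutator ↥K → δ.toHomUnits x = 1 := by
    intro x hx
    have hle : _root_.commutator ↥K ≤ δ.toHomUnits.ker := by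
      rw [_root_.commutator_def]
      rw [Subgroup.commutator_le]
      intro a _ b _
      rw [MonoidHom.mem_ker, map_commutatorElement]
      exact commutatorElement_eq_one_iff_mul_comm.mpr (mul_comm _ _)
    exact hle hx
  have hδz : δ z = 1 := by
    have := hδcomm z hzd
    have h2 : ((δ.toHomUnits z : ℂˣ) : ℂ) = δ z := rfl
    rw [this] at h2
    exact h2.symm
  -- compute δ z = μ ^ finrank E
  have hzE : (Matrix.toEuclideanLin (mat z)).restrict (hinv z)
      = (μ • 1 : Module.End ℂ ↥E) := by
    apply LinearMap.ext
    intro v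
    apply Subtype.ext
    have hv : Matrix.toEuclideanLin Z (v : EuclideanSpace ℂ (Fin N)) = μ • (v : EuclideanSpace ℂ (Fin N)) :=
      Module.End.mem_eigenspace_iff.mp v.2
    simp only [LinearMap.restrict_apply, ← hZ, hv]
    rfl
  have hdet : δ z = μ ^ (Module.finrank ℂ ↥E) := by
    rw [hδ]
    simp only [MonoidHom.coe_mk, OneHom.coe_mk]
    rw [hzE]
    rw [LinearMap.det_smul]
    simp
  -- finrank bounds
  have hpos : 0 < Module.finrank ℂ ↥E := by
    obtain ⟨v, hv⟩ := hμ.exists_hasEigenvector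
    have : Nontrivial ↥E := ⟨⟨⟨v, hv.1⟩, 0, by simp [Subtype.ext_iff, hv.2]⟩⟩
    exact Module.finrank_pos
  have hleN : Module.finrank ℂ ↥E ≤ N := by
    have := Submodule.finrank_le E
    rwa [finrank_euclideanSpace_fin] at this
  have hdvd : Module.finrank ℂ ↥E ∣ Nat.factorial N := Nat.dvd_factorial hpos hleN
  have hμd : μ ^ (Module.finrank ℂ ↥E) = 1 := by rw [← hdet, hδz]
  obtain ⟨c, hc⟩ := hdvd
  rw [hc, pow_mul, hμd, one_pow]

private theorem center_commutator_pow_eq_one {N : ℕ}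
    (K : Subgroup (Matrix.unitaryGroup (Fin N) ℂ)) (z : ↥K)
    (hzc : z ∈ center K) (hzd : z ∈ _root_.commutator ↥K) :
    z ^ (Nat.factorial N) = 1 := by
  have hZmem : ((z : Matrix.unitaryGroup (Fin N) ℂ) : Matrix (Fin N) (Fin N) ℂ)
      ∈ Matrix.unitaryGroup (Fin N) ℂ := (z : Matrix.unitaryGroup (Fin N) ℂ).2
  have hmat : (((z : Matrix.unitaryGroup (Fin N) ℂ) : Matrix (Fin N) (Fin N) ℂ))
      ^ (Nat.factorial N) = 1 :=
    unitary_pow_eq_one_of_eigenvalues (Nat.factorial N) _ hZmem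
      (fun μ hμ => eigenvalue_root_of_unity K z hzc hzd μ hμ)
  apply Subtype.ext
  apply Subtype.ext
  push_cast
  exact hmat

/-- for a finitely generated nilpotent group `Γ` and a finite-dimensional unitary
representation `π : Γ → U(N)`, the image `π([Γ,Γ])` is a finite subgroup of `U(N)`. -/
theorem image_commutator_finite_of_nilpotent {Γ : Type} [Group Γ] [Group.FG Γ]
    [Group.IsNilpotent Γ] (N : ℕ) (π : Γ →* Matrix.unitaryGroup (Fin N) ℂ) :
    Set.Finite (((commutator Γ).map π : Subgroup (Matrix.unitaryGroup (Fin N) ℂ)) :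
      Set (Matrix.unitaryGroup (Fin N) ℂ)) := by
  classical
  set K : Subgroup (Matrix.unitaryGroup (Fin N) ℂ) := π.range with hK
  haveI : Group.IsNilpotent ↥K :=
    nilpotent_of_surjective π.rangeRestrict π.rangeRestrict_surjective
  haveI : Group.FG ↥K := Group.fg_range π
  have hfact : 0 < Nat.factorial N := Nat.factorial_pos N
  have hA : ∀ z : ↥K, z ∈ center ↥K → z ∈ _root_.commutator ↥K →
      z ^ (Nat.factorial N) = 1 := fun z h1 h2 => center_commutator_pow_eq_one K z h1 h2
  have hBB := exists_pow_mem_center (Nat.factorial N) hfact hA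
  have htorQ : Monoid.IsTorsion (↥K ⧸ center ↥K) := by
    intro q
    obtain ⟨g, rfl⟩ := QuotientGroup.mk'_surjective (center ↥K) q
    obtain ⟨m, hm, hg⟩ := hBB g
    refine isOfFinOrder_iff_pow_eq_one.mpr ⟨m, hm, ?_⟩
    rw [← map_pow, ← MonoidHom.mem_ker, QuotientGroup.ker_mk']
    exact hg
  haveI hQfin : Finite (↥K ⧸ center ↥K) :=
    finite_of_fg_nilpotent_torsion _ (QuotientGroup.fg _) htorQ
  haveI : (center ↥K).FiniteIndex :=
    ⟨Nat.card_ne_zero.mpr ⟨inferInstance, hQfin⟩⟩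
  haveI : Group.FG ↥(center ↥K) := Subgroup.fg_of_index_ne_zero _
  set C : Subgroup ↥K := _root_.commutator ↥K with hC
  set T : Subgroup ↥K := center ↥K ⊓ C with hT
  haveI : IsMulCommutative T :=
    ⟨⟨fun a b => Subtype.ext ((Subgroup.mem_center_iff.mp a.2.1 b.1).symm)⟩⟩
  haveI : Group.FG ↥T := by
    haveI : Group.FG ↥(T.subgroupOf (center ↥K)) := fg_subgroup_of_comm _
    exact Group.fg_of_surjective
      (f := (Subgroup.subgroupOfEquivOfLe (inf_le_left : T ≤ center ↥K)).toMonoidHom)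
      (Subgroup.subgroupOfEquivOfLe _).surjective
  have htorT : Monoid.IsTorsion ↥T := by
    intro t
    refine isOfFinOrder_iff_pow_eq_one.mpr ⟨Nat.factorial N, hfact, ?_⟩
    have h1 := hA t.1 t.2.1 t.2.2
    apply Subtype.ext
    push_cast
    exact h1
  haveI hTfin : Finite ↥T := CommGroup.finite_of_fg_torsion _ htorT
  set φ : ↥C →* ↥K ⧸ center ↥K := (QuotientGroup.mk' (center ↥K)).comp C.subtype with hφ
  have hker : φ.ker = T.subgroupOf C := by
    ext x
    rw [MonoidHom.mem_ker, Subgroup.mem_subgroupOf]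
    rw [hφ]
    simp only [MonoidHom.coe_comp, Function.comp_apply, Subgroup.coe_subtype]
    rw [← MonoidHom.mem_ker, QuotientGroup.ker_mk']
    constructor
    · intro h; exact ⟨h, x.2⟩
    · intro h; exact h.1
  haveI : Finite ↥(φ.ker) := by
    rw [hker]
    exact Finite.of_equiv ↥T (Subgroup.subgroupOfEquivOfLe (inf_le_right : T ≤ C)).symm.toEquiv
  haveI : Finite (↥C ⧸ φ.ker) :=
    Finite.of_equiv ↥φ.range (QuotientGroup.quotientKerEquivRange φ).symm.toEquiv
  haveI hCfin : Finite ↥C := Finite.of_subgroup_quotient (φ.ker)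
  have himage : (_root_.commutator Γ).map π = Subgroup.map K.subtype C := by
    rw [hC, _root_.commutator_def, _root_.commutator_def, Subgroup.map_commutator,
      Subgroup.map_commutator]
    have h1 : Subgroup.map π ⊤ = K := by rw [← MonoidHom.range_eq_map]
    have h2 : Subgroup.map K.subtype ⊤ = K := by
      rw [← MonoidHom.range_eq_map, Subgroup.range_subtype]
    rw [h1, h2]
  rw [himage, Subgroup.coe_map]
  have : Finite ↥(C : Set ↥K) := hCfin
  exact Set.Finite.image _ (Set.toFinite _)
end

section
/- Let Γ be a finitely generated nilpotent group and H a finite-index normal subgroup of [Γ, Γ]. Then there exists a normal subgroup Δ of finite index in Γ with Δ ∩ [Γ, Γ] = H. -/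
open Subgroup
open scoped IsMulCommutative

private lemma finite_torsion_of_fg (Z : Type*) [CommGroup Z] [Group.FG Z] :
    Finite (CommGroup.torsion Z) := by
  haveI : Module.Finite ℤ (Additive Z) := Module.Finite.iff_addGroup_fg.mpr inferInstance
  set T : Subgroup Z := CommGroup.torsion Z with hT
  have h1 : (AddSubgroup.toIntSubmodule (Subgroup.toAddSubgroup T)).FG :=
    IsNoetherian.noetherian _
  have h2 : (Subgroup.toAddSubgroup T : AddSubgroup (Additive Z)).FG :=
    (Submodule.fg_iff_addSubgroup_fg _).mp h1
  have h3 : T.FG := (Subgroup.fg_iff_add_fg T).mpr h2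
  haveI : Group.FG T := (Group.fg_iff_subgroup_fg T).mpr h3
  exact CommGroup.finite_of_fg_torsion T (fun x => Submonoid.isOfFinOrder_coe.mp x.2)

private lemma exists_compl_of_finite_commutator {G : Type*} [Group G] [Group.FG G]
    (hfin : Finite (commutator G)) :
    ∃ W : Subgroup G, W.Normal ∧ W.FiniteIndex ∧ W ⊓ commutator G = ⊥ := by
  haveI : Finite (commutatorSet G) := by
    have hsub : commutatorSet G ⊆ (commutator G : Set G) :=
      commutator_eq_closure G ▸ Subgroup.subset_closure
    exact Set.Finite.to_subtype (Set.Finite.subset (commutator G : Set G).toFinite hsub)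
  set Z := Subgroup.center G with hZ
  haveI : Subgroup.FiniteIndex Z := Subgroup.finiteIndex_center
  haveI : Group.FG Z := Subgroup.fg_of_index_ne_zero Z
  haveI : Finite (CommGroup.torsion Z) := finite_torsion_of_fg Z
  set m := Monoid.exponent (CommGroup.torsion Z) with hmdef
  have hm : m ≠ 0 := Monoid.ExponentExists.exponent_ne_zero .of_finite
  set φ : Z →* Z := powMonoidHom m with hφ
  set W : Subgroup G := φ.range.map Z.subtype with hW
  have hWle : W ≤ Z := Subgroup.map_subtype_le _
  have hWsub : W.subgroupOf Z = φ.range :=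
    Subgroup.comap_map_eq_self_of_injective Z.subtype_injective _
  refine ⟨W, ?_, ?_, ?_⟩
  · constructor
    intro w hw g
    have hc := Subgroup.mem_center_iff.mp (hWle hw) g
    have : g * w * g⁻¹ = w := by rw [hc, mul_assoc, mul_inv_cancel, mul_one]
    rwa [this]
  · -- finite index
    haveI : (φ.range).FiniteIndex := by
      have htor : Monoid.IsTorsion (Z ⧸ φ.range) := by
        intro x
        obtain ⟨z, rfl⟩ := QuotientGroup.mk_surjective x
        refine isOfFinOrder_iff_pow_eq_one.mpr ⟨m, Nat.pos_of_ne_zero hm, ?_⟩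
        rw [← QuotientGroup.mk_pow, QuotientGroup.eq_one_iff]
        exact ⟨z, rfl⟩
      haveI : Finite (Z ⧸ φ.range) := CommGroup.finite_of_fg_torsion _ htor
      exact Subgroup.finiteIndex_of_finite_quotient
    constructor
    have := Subgroup.relIndex_mul_index hWle
    rw [Subgroup.relIndex, hWsub] at this
    rw [← this]
    exact Nat.mul_ne_zero Subgroup.FiniteIndex.index_ne_zero Subgroup.FiniteIndex.index_ne_zero
  · -- intersection trivial
    rw [eq_bot_iff]
    rintro x ⟨hx1, hx2⟩
    obtain ⟨z, hz, rfl⟩ := hx1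
    obtain ⟨y, rfl⟩ := hz
    -- (y^m : G) has finite order since it lies in the finite commutator subgroup
    have hfo : IsOfFinOrder (Z.subtype (φ y)) := by
      have h1 : IsOfFinOrder (⟨Z.subtype (φ y), hx2⟩ : commutator G) := isOfFinOrder_of_finite _
      obtain ⟨n, hn, h⟩ := isOfFinOrder_iff_pow_eq_one.mp h1
      exact isOfFinOrder_iff_pow_eq_one.mpr
        ⟨n, hn, by simpa [Subtype.ext_iff] using congrArg Subtype.val h⟩
    have hyfo : IsOfFinOrder (φ y) := Submonoid.isOfFinOrder_coe.mp hfo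
    have hytor : y ∈ CommGroup.torsion Z := by
      have : IsOfFinOrder ((y : Z) ^ m) := hyfo
      exact this.of_pow hm
    have : (⟨y, hytor⟩ : CommGroup.torsion Z) ^ m = 1 := Monoid.pow_exponent_eq_one _
    have hym : (y : Z) ^ m = 1 := by
      simpa [Subtype.ext_iff] using this
    simp only [Subgroup.mem_bot]
    show Z.subtype (φ y) = 1
    rw [hφ]
    simp [powMonoidHom_apply, hym]

/-- in a finitely generated nilpotent group `Γ`, every (`Γ`-normal) finite-index
subgroup `H` of the commutator subgroup `[Γ,Γ]` is the intersection of `[Γ,Γ]` with a normal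
finite-index subgroup `Δ` of `Γ`. -/
theorem exists_finiteIndex_normal_inter_commutator {Γ : Type} [Group Γ] [Group.FG Γ]
    [Group.IsNilpotent Γ] (H : Subgroup Γ) (hle : H ≤ commutator Γ) (hnorm : H.Normal)
    (hfin : (H.subgroupOf (commutator Γ)).FiniteIndex) :
    ∃ Δ : Subgroup Γ, Δ.Normal ∧ Δ.FiniteIndex ∧ Δ ⊓ commutator Γ = H := by
  set mkH := QuotientGroup.mk' H with hmk
  have hsurj : Function.Surjective mkH := QuotientGroup.mk'_surjective H
  have hcm : Subgroup.map mkH (commutator Γ) = commutator (Γ ⧸ H) := by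
    rw [commutator_def, commutator_def, Subgroup.map_commutator,
      Subgroup.map_top_of_surjective _ hsurj]
  set f := mkH.comp (commutator Γ).subtype with hf
  have hker : f.ker = H.subgroupOf (commutator Γ) := by
    rw [hf, ← MonoidHom.comap_ker, QuotientGroup.ker_mk']
    rfl
  haveI : f.ker.FiniteIndex := hker ▸ hfin
  have hfr : Finite f.range :=
    Finite.of_equiv _ (QuotientGroup.quotientKerEquivRange f).toEquiv
  have hrange : f.range = Subgroup.map mkH (commutator Γ) := by
    rw [hf, MonoidHom.range_comp, Subgroup.range_subtype]
  have hfinc : Finite (commutator (Γ ⧸ H)) := by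
    rw [← hcm, ← hrange]; exact hfr
  obtain ⟨W, hWn, hWf, hWi⟩ := exists_compl_of_finite_commutator hfinc
  refine ⟨W.comap mkH, hWn.comap mkH, ?_, ?_⟩
  · exact ⟨by rw [Subgroup.index_comap_of_surjective _ hsurj]; exact hWf.1⟩
  · apply le_antisymm
    · rintro x ⟨hx1, hx2⟩
      have hm : mkH x ∈ W ⊓ commutator (Γ ⧸ H) :=
        ⟨hx1, hcm ▸ Subgroup.mem_map_of_mem mkH hx2⟩
      rw [hWi, Subgroup.mem_bot] at hm
      have : x ∈ mkH.ker := hm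
      rwa [hmk, QuotientGroup.ker_mk'] at this
    · refine le_inf (fun h hh => ?_) hle
      have h1 : mkH h = 1 := by
        rw [hmk]
        exact (QuotientGroup.eq_one_iff h).mpr hh
      show mkH h ∈ W
      rw [h1]
      exact W.one_mem
end

section
/- Let Γ be a finitely generated torsion-free nilpotent group arising as the group of ℤ-points of a unipotent algebraic ℚ-group that admits a filtration U = U₀ ⊇ U₁ ⊇ ⋯ ⊇ U_d = 1 by normal ℚ-subgroups with each quotient U_i/U_{i+1} ℚ-isomorphic to the additive group 𝔾_a. Then every finite-index subgroup of any arithmetic subgroup Γ of U(ℚ) is a congruence subgroup, i.e. contains the kernel of the reduction map U(ℤ) → U(ℤ/Nℤ) for some integer N ≥ 1. -/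
open Matrix

noncomputable section

/-- The inclusion `GL_m(ℤ) → GL_m(ℚ)`. -/
def glIntToRat (m : ℕ) :
    Matrix.GeneralLinearGroup (Fin m) ℤ →* Matrix.GeneralLinearGroup (Fin m) ℚ :=
  Units.map ((Int.castRingHom ℚ).mapMatrix.toMonoidHom)

/-- Reduction modulo `N` on `GL_m(ℤ)`. -/
def glRed (m N : ℕ) :
    Matrix.GeneralLinearGroup (Fin m) ℤ →* Matrix.GeneralLinearGroup (Fin m) (ZMod N) :=
  Units.map ((Int.castRingHom (ZMod N)).mapMatrix.toMonoidHom)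

namespace CSPaux

/-- derived chain of a subgroup. -/
def ds {T : Type*} [Group T] (H : Subgroup T) : ℕ → Subgroup T
  | 0 => H
  | (n+1) => ⁅ds H n, ds H n⁆

theorem ds_succ_eq {T : Type*} [Group T] (H : Subgroup T) (n : ℕ) :
    ds H (n+1) = ds ⁅H, H⁆ n := by
  induction n with
  | zero => rfl
  | succ n ih => show ⁅ds H (n+1), ds H (n+1)⁆ = _; rw [ih]; rfl

theorem commutator_subgroup_le_self {T : Type*} [Group T] (H : Subgroup T) :
    ⁅H, H⁆ ≤ H := by
  rw [Subgroup.commutator_le]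
  intro a ha b hb
  exact H.mul_mem (H.mul_mem (H.mul_mem ha hb) (H.inv_mem ha)) (H.inv_mem hb)

theorem conj_mem_commutator {T : Type*} [Group T] (H : Subgroup T) {g c : T}
    (hg : g ∈ H) (hc : c ∈ ⁅H, H⁆) : g⁻¹ * c * g ∈ ⁅H, H⁆ := by
  have hle : ⁅H, H⁆ ≤ Subgroup.comap ((MulAut.conj g⁻¹).toMonoidHom) ⁅H, H⁆ := by
    rw [Subgroup.commutator_le]
    intro a ha b hb
    simp only [Subgroup.mem_comap]
    rw [map_commutatorElement]
    exact Subgroup.commutator_mem_commutator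
      (by simpa [MulAut.conj_apply, mul_assoc] using H.mul_mem (H.mul_mem (H.inv_mem hg) ha) hg)
      (by simpa [MulAut.conj_apply, mul_assoc] using H.mul_mem (H.mul_mem (H.inv_mem hg) hb) hg)
  have := hle hc
  simpa [Subgroup.mem_comap, MulAut.conj_apply, mul_assoc] using this

section Matrices

variable {m : ℕ} {G : Subgroup (Matrix.GeneralLinearGroup (Fin m) ℤ)}

/-- the rational matrix of an element of `G`. -/
def MQ (g : G) : Matrix (Fin m) (Fin m) ℚ :=
  ((Int.castRingHom ℚ).mapMatrix : Matrix (Fin m) (Fin m) ℤ →+* Matrix (Fin m) (Fin m) ℚ)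
    ((g : Matrix.GeneralLinearGroup (Fin m) ℤ) : Matrix (Fin m) (Fin m) ℤ)

theorem MQ_mul (g h : G) : MQ (g * h) = MQ g * MQ h := by
  unfold MQ
  rw [← _root_.map_mul]
  norm_cast

theorem MQ_one : MQ (1 : G) = 1 := by
  unfold MQ
  norm_cast
  exact _root_.map_one _

theorem MQ_mul_inv (g : G) : MQ g * MQ g⁻¹ = 1 := by
  rw [← MQ_mul, mul_inv_cancel, MQ_one]

theorem MQ_inv_mul (g : G) : MQ g⁻¹ * MQ g = 1 := by
  rw [← MQ_mul, inv_mul_cancel, MQ_one]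

end Matrices

section Flag

variable {m : ℕ} {G : Subgroup (Matrix.GeneralLinearGroup (Fin m) ℤ)}

/-- the canonical invariant flag. -/
def Wfl (G : Subgroup (Matrix.GeneralLinearGroup (Fin m) ℤ)) : ℕ → Submodule ℚ (Fin m → ℚ)
  | 0 => ⊥
  | (i+1) => ⨅ g : G, Submodule.comap ((MQ g).mulVecLin - LinearMap.id) (Wfl G i)

theorem mem_Wfl_succ {v : Fin m → ℚ} {i : ℕ} :
    v ∈ Wfl G (i+1) ↔ ∀ g : G, MQ g *ᵥ v - v ∈ Wfl G i := by
  show v ∈ ⨅ g : G, _ ↔ _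
  rw [Submodule.mem_iInf]
  apply forall_congr'
  intro g
  rw [Submodule.mem_comap, LinearMap.sub_apply, Matrix.mulVecLin_apply, LinearMap.id_apply]

theorem Wfl_mono_succ (i : ℕ) : Wfl G i ≤ Wfl G (i+1) := by
  induction i with
  | zero =>
      intro v hv
      have : v = 0 := hv
      subst this
      rw [mem_Wfl_succ]
      intro g
      simp [Matrix.mulVec_zero]
  | succ i ih =>
      intro v hv
      rw [mem_Wfl_succ] at hv ⊢
      intro g
      exact ih (hv g)

theorem Wfl_mono {i j : ℕ} (h : i ≤ j) : Wfl G i ≤ Wfl G j := by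
  induction j with
  | zero => simp_all
  | succ j ih =>
      rcases Nat.lt_or_ge i (j+1) with h' | h'
      · exact le_trans (ih (by omega)) (Wfl_mono_succ j)
      · have : i = j + 1 := by omega
        subst this; exact le_rfl

theorem Wfl_inv {i : ℕ} (g : G) {v : Fin m → ℚ} (hv : v ∈ Wfl G i) :
    MQ g *ᵥ v ∈ Wfl G i := by
  induction i generalizing g v with
  | zero =>
      have : v = 0 := hv
      subst this
      simp [Matrix.mulVec_zero]
  | succ i ih =>
      rw [mem_Wfl_succ] at hv ⊢
      intro h
      have key : MQ h *ᵥ (MQ g *ᵥ v) - MQ g *ᵥ v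
          = MQ g *ᵥ (MQ (g⁻¹ * h * g) *ᵥ v - v) := by
        rw [Matrix.mulVec_sub, Matrix.mulVec_mulVec, Matrix.mulVec_mulVec, ← MQ_mul, ← MQ_mul]
        congr 2
        group
      rw [key]
      exact ih g (hv (g⁻¹ * h * g))

theorem Wfl_drop {i : ℕ} (g : G) {v : Fin m → ℚ} (hv : v ∈ Wfl G i) :
    MQ g *ᵥ v - v ∈ Wfl G (i - 1) := by
  cases i with
  | zero =>
      have : v = 0 := hv
      subst this
      simp [Matrix.mulVec_zero]
  | succ i =>
      rw [mem_Wfl_succ] at hv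
      exact hv g

end Flag

section FVL

variable {m : ℕ} {G : Subgroup (Matrix.GeneralLinearGroup (Fin m) ℤ)}

theorem lemA : ∀ (r : ℕ) (V' W : Submodule ℚ (Fin m → ℚ)),
    Module.finrank ℚ V' ≤ r → W ≤ V' → W ≠ V' →
    ∀ (SA : Set (Matrix (Fin m) (Fin m) ℚ)),
    (∀ A ∈ SA, ∀ v ∈ W, A *ᵥ v ∈ W) →
    (∀ A ∈ SA, ∀ v ∈ V', A *ᵥ v ∈ V') →
    (∀ A ∈ SA, ∀ B ∈ SA, ∀ v ∈ V', A *ᵥ (B *ᵥ v) - B *ᵥ (A *ᵥ v) ∈ W) →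
    (∀ A ∈ SA, (A - 1) ^ m = 0) →
    ∃ v ∈ V', v ∉ W ∧ ∀ A ∈ SA, A *ᵥ v - v ∈ W := by
  intro r
  induction r with
  | zero =>
      intro V' W hr hWV hne SA hW hV hcomm hnil
      by_cases hall : ∀ A ∈ SA, ∀ v ∈ V', A *ᵥ v - v ∈ W
      · obtain ⟨x, hxV, hxW⟩ := SetLike.exists_of_lt (lt_of_le_of_ne hWV hne)
        exact ⟨x, hxV, hxW, fun A hA => hall A hA x hxV⟩
      · exfalso
        push_neg at hall
        obtain ⟨A₀, hA₀, v₀, hv₀, hbad⟩ := hall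
        -- V' has finrank 0 hence V' = ⊥, so v₀ = 0, so A₀ *ᵥ v₀ - v₀ = 0 ∈ W
        have : V' = ⊥ := Submodule.finrank_eq_zero.mp (by omega)
        rw [this, Submodule.mem_bot] at hv₀
        subst hv₀
        apply hbad
        simp [Matrix.mulVec_zero]
  | succ r ih =>
      intro V' W hr hWV hne SA hW hV hcomm hnil
      classical
      by_cases hall : ∀ A ∈ SA, ∀ v ∈ V', A *ᵥ v - v ∈ W
      · obtain ⟨x, hxV, hxW⟩ := SetLike.exists_of_lt (lt_of_le_of_ne hWV hne)
        exact ⟨x, hxV, hxW, fun A hA => hall A hA x hxV⟩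
      · push_neg at hall
        obtain ⟨A₀, hA₀, v₀, hv₀, hbad⟩ := hall
        set L : (Fin m → ℚ) →ₗ[ℚ] (Fin m → ℚ) := (A₀).mulVecLin - LinearMap.id with hL
        have hLapp : ∀ v, L v = A₀ *ᵥ v - v := fun v => by
          rw [hL, LinearMap.sub_apply, Matrix.mulVecLin_apply, LinearMap.id_apply]
        set V'' : Submodule ℚ (Fin m → ℚ) := V' ⊓ Submodule.comap L W with hV''
        have hV''le : V'' ≤ V' := inf_le_left
        have hmemV'' : ∀ v, v ∈ V'' ↔ v ∈ V' ∧ A₀ *ᵥ v - v ∈ W := by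
          intro v
          rw [hV'', Submodule.mem_inf, Submodule.mem_comap, hLapp]
        -- the iterates
        set u : ℕ → (Fin m → ℚ) := fun j => ((A₀ - 1) ^ j) *ᵥ v₀ with hu
        have hu0 : u 0 = v₀ := by rw [hu]; simp [Matrix.one_mulVec]
        have husucc : ∀ j, u (j+1) = A₀ *ᵥ (u j) - u j := by
          intro j
          rw [hu]
          show ((A₀ - 1) ^ (j+1)) *ᵥ v₀ = _
          rw [pow_succ', ← Matrix.mulVec_mulVec, Matrix.sub_mulVec, Matrix.one_mulVec]
        have huV' : ∀ j, u j ∈ V' := by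
          intro j
          induction j with
          | zero => rw [hu0]; exact hv₀
          | succ j ihj => rw [husucc]; exact sub_mem (hV A₀ hA₀ _ ihj) ihj
        have hPex : ∃ j, u j ∈ W := by
          refine ⟨m, ?_⟩
          rw [hu]
          show ((A₀ - 1) ^ m) *ᵥ v₀ ∈ W
          rw [hnil A₀ hA₀, Matrix.zero_mulVec]
          exact zero_mem _
        set j₀ := Nat.find hPex with hj₀
        have hj₀mem : u j₀ ∈ W := Nat.find_spec hPex
        have hj₀pos : j₀ ≠ 0 := by
          intro h0
          have : u 0 ∈ W := by rw [← h0]; exact hj₀mem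
          rw [hu0] at this
          exact hbad (sub_mem (hW A₀ hA₀ v₀ this) this)
        set w := u (j₀ - 1) with hw
        have hwnW : w ∉ W := Nat.find_min hPex (by omega)
        have hwD : A₀ *ᵥ w - w ∈ W := by
          have : u ((j₀ - 1) + 1) = A₀ *ᵥ w - w := husucc (j₀ - 1)
          rw [show (j₀ - 1) + 1 = j₀ by omega] at this
          rw [← this]; exact hj₀mem
        have hwV'' : w ∈ V'' := (hmemV'' w).mpr ⟨huV' _, hwD⟩
        have hneW'' : W ≠ V'' := fun h => hwnW (h ▸ hwV'')
        have hWleV'' : W ≤ V'' := by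
          intro v hv
          exact (hmemV'' v).mpr ⟨hWV hv, sub_mem (hW A₀ hA₀ v hv) hv⟩
        have hv₀nV'' : v₀ ∉ V'' := fun h => hbad ((hmemV'' v₀).mp h).2
        have hlt : V'' < V' := lt_of_le_of_ne hV''le (fun h => hv₀nV'' (h ▸ hv₀))
        have hrank : Module.finrank ℚ V'' ≤ r := by
          have := Submodule.finrank_lt_finrank_of_lt hlt
          omega
        obtain ⟨v, hvV'', hvnW, hdrop⟩ := ih V'' W hrank hWleV'' hneW'' SA hW
          (by
            intro A hA v hv
            rw [hmemV'' v] at hv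
            refine (hmemV'' _).mpr ⟨hV A hA v hv.1, ?_⟩
            have key : A₀ *ᵥ (A *ᵥ v) - A *ᵥ v
                = (A₀ *ᵥ (A *ᵥ v) - A *ᵥ (A₀ *ᵥ v)) + (A *ᵥ (A₀ *ᵥ v - v)) := by
              rw [Matrix.mulVec_sub]
              abel
            rw [key]
            exact add_mem (hcomm A₀ hA₀ A hA v hv.1) (hW A hA _ hv.2))
          (fun A hA B hB v hv => hcomm A hA B hB v (hV''le hv))
          hnil
        exact ⟨v, hV''le hvV'', hvnW, hdrop⟩

end FVL

section LemB

variable {m : ℕ} {G : Subgroup (Matrix.GeneralLinearGroup (Fin m) ℤ)}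

open scoped commutatorElement in
theorem lemB (hu : ∀ g : G, (MQ g - 1) ^ m = 0) :
    ∀ (n : ℕ) (H : Subgroup G), ds H n = ⊥ →
    ∀ (W : Submodule ℚ (Fin m → ℚ)), W ≠ ⊤ →
    (∀ g ∈ H, ∀ v ∈ W, MQ g *ᵥ v ∈ W) →
    ∃ v, v ∉ W ∧ ∀ g ∈ H, MQ g *ᵥ v - v ∈ W := by
  intro n
  induction n with
  | zero =>
      intro H hH W hWne hWinv
      have hTop : ¬ (∀ v, v ∈ W) := fun h => hWne (Submodule.eq_top_iff'.mpr h)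
      push_neg at hTop
      obtain ⟨v, hv⟩ := hTop
      refine ⟨v, hv, fun g hg => ?_⟩
      have hg1 : g = 1 := by
        have : g ∈ (⊥ : Subgroup G) := by rw [← hH]; exact hg
        simpa using this
      subst hg1
      rw [MQ_one, Matrix.one_mulVec]
      simp
  | succ n ih =>
      intro H hH W hWne hWinv
      set A := ⁅H, H⁆ with hA
      have hAle : A ≤ H := commutator_subgroup_le_self H
      have hAds : ds A n = ⊥ := by rw [← ds_succ_eq]; exact hH
      obtain ⟨v', hv'nW, hv'drop⟩ := ih A hAds W hWne
        (fun g hg v hv => hWinv g (hAle hg) v hv)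
      set W' : Submodule ℚ (Fin m → ℚ) :=
        ⨅ c : A, Submodule.comap ((MQ (c : G)).mulVecLin - LinearMap.id) W with hW'
      have hmemW' : ∀ v, v ∈ W' ↔ ∀ c ∈ A, MQ c *ᵥ v - v ∈ W := by
        intro v
        rw [hW', Submodule.mem_iInf]
        constructor
        · intro h c hc
          have := h ⟨c, hc⟩
          rwa [Submodule.mem_comap, LinearMap.sub_apply, Matrix.mulVecLin_apply,
            LinearMap.id_apply] at this
        · intro h c
          rw [Submodule.mem_comap, LinearMap.sub_apply, Matrix.mulVecLin_apply,
            LinearMap.id_apply]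
          exact h c c.2
      have hWleW' : W ≤ W' := fun v hv =>
        (hmemW' v).mpr (fun c hc => sub_mem (hWinv c (hAle hc) v hv) hv)
      have hv'W' : v' ∈ W' := (hmemW' v').mpr hv'drop
      have hneWW' : W ≠ W' := fun h => hv'nW (h ▸ hv'W')
      have hW'inv : ∀ g ∈ H, ∀ v ∈ W', MQ g *ᵥ v ∈ W' := by
        intro g hg v hv
        rw [hmemW'] at hv ⊢
        intro c hc
        have hconj : g⁻¹ * c * g ∈ A := conj_mem_commutator H hg hc
        have key : MQ c *ᵥ (MQ g *ᵥ v) - MQ g *ᵥ v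
            = MQ g *ᵥ (MQ (g⁻¹ * c * g) *ᵥ v - v) := by
          rw [Matrix.mulVec_sub, Matrix.mulVec_mulVec, Matrix.mulVec_mulVec, ← MQ_mul, ← MQ_mul]
          congr 2
          group
        rw [key]
        exact hWinv g hg _ (hv _ hconj)
      obtain ⟨v, hvW', hvnW, hdrop⟩ := lemA (Module.finrank ℚ W') W' W le_rfl hWleW' hneWW'
        ((fun g : G => MQ g) '' (H : Set G))
        (by rintro A' ⟨g, hg, rfl⟩ v hv; exact hWinv g hg v hv)
        (by rintro A' ⟨g, hg, rfl⟩ v hv; exact hW'inv g hg v hv)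
        (by
          rintro A' ⟨g, hg, rfl⟩ B' ⟨h, hh, rfl⟩ v hv
          have hc : (h * g)⁻¹ * (g * h) ∈ A := by
            have hcc : (h*g)⁻¹ * (g*h) = ⁅g⁻¹, h⁻¹⁆ := by group
            rw [hcc]
            exact Subgroup.commutator_mem_commutator (H.inv_mem hg) (H.inv_mem hh)
          have e1 : MQ g *ᵥ (MQ h *ᵥ v) = MQ (g*h) *ᵥ v := by
            rw [Matrix.mulVec_mulVec, ← MQ_mul]
          have e2 : MQ h *ᵥ (MQ g *ᵥ v) = MQ (h*g) *ᵥ v := by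
            rw [Matrix.mulVec_mulVec, ← MQ_mul]
          have e3 : MQ (h*g) *ᵥ (MQ ((h*g)⁻¹ * (g*h)) *ᵥ v) = MQ (g*h) *ᵥ v := by
            rw [Matrix.mulVec_mulVec, ← MQ_mul]
            congr 2
            group
          have key : MQ g *ᵥ (MQ h *ᵥ v) - MQ h *ᵥ (MQ g *ᵥ v)
              = MQ (h*g) *ᵥ (MQ ((h*g)⁻¹ * (g*h)) *ᵥ v - v) := by
            rw [Matrix.mulVec_sub, e1, e2, e3]
          rw [key]
          exact hWinv (h*g) (H.mul_mem hh hg) _ ((hmemW' v).mp hv _ hc))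
        (fun A' hA' => by obtain ⟨g, hg, rfl⟩ := hA'; exact hu g)
      exact ⟨v, hvnW, fun g hg => hdrop (MQ g) ⟨g, hg, rfl⟩⟩

theorem Wfl_top (hu : ∀ g : G, (MQ g - 1) ^ m = 0)
    (hsolv : ∃ dd, ds (⊤ : Subgroup G) dd = ⊥) : Wfl G m = ⊤ := by
  have grow : ∀ i, Wfl G i ≠ ⊤ → Wfl G i < Wfl G (i+1) := by
    intro i hne
    obtain ⟨dd, hdd⟩ := hsolv
    obtain ⟨v, hvnW, hdrop⟩ := lemB hu dd ⊤ hdd (Wfl G i) hne (fun g _ v hv => Wfl_inv g hv)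
    refine lt_of_le_of_ne (Wfl_mono_succ i) (fun h => hvnW ?_)
    have hv1 : v ∈ Wfl G (i+1) := (mem_Wfl_succ).mpr (fun g => hdrop g trivial)
    rwa [← h] at hv1
  have key : ∀ i, Wfl G i = ⊤ ∨ i ≤ Module.finrank ℚ (Wfl G i) := by
    intro i
    induction i with
    | zero => right; omega
    | succ i ihi =>
        rcases ihi with h | h
        · left; exact top_le_iff.mp (h ▸ Wfl_mono_succ i)
        · by_cases h' : Wfl G i = ⊤
          · left; exact top_le_iff.mp (h' ▸ Wfl_mono_succ i)
          · right
            have := Submodule.finrank_lt_finrank_of_lt (grow i h')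
            omega
  rcases key m with h | h
  · exact h
  · have hle : Module.finrank ℚ (Wfl G m) ≤ m := by
      have h2 := Submodule.finrank_le (Wfl G m)
      rwa [Module.finrank_pi, Fintype.card_fin] at h2
    apply Submodule.eq_top_of_finrank_eq
    rw [Module.finrank_pi, Fintype.card_fin]
    omega

end LemB

section GkSec

variable {m : ℕ} {G : Subgroup (Matrix.GeneralLinearGroup (Fin m) ℤ)}

/-- matrices dropping the flag by `c` steps. -/
def Dsub (G : Subgroup (Matrix.GeneralLinearGroup (Fin m) ℤ)) (c : ℕ) :
    Submodule ℚ (Matrix (Fin m) (Fin m) ℚ) where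
  carrier := {X | ∀ i : ℕ, ∀ v ∈ Wfl G i, X *ᵥ v ∈ Wfl G (i - c)}
  add_mem' := by
    intro X Y hX hY i v hv
    rw [Matrix.add_mulVec]
    exact add_mem (hX i v hv) (hY i v hv)
  zero_mem' := by
    intro i v hv
    rw [Matrix.zero_mulVec]
    exact zero_mem _
  smul_mem' := by
    intro q X hX i v hv
    rw [Matrix.smul_mulVec]
    exact Submodule.smul_mem _ _ (hX i v hv)

theorem mem_Dsub {X : Matrix (Fin m) (Fin m) ℚ} {c : ℕ} :
    X ∈ Dsub G c ↔ ∀ i : ℕ, ∀ v ∈ Wfl G i, X *ᵥ v ∈ Wfl G (i - c) := Iff.rfl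

theorem Dsub_antitone {c c' : ℕ} (h : c ≤ c') : Dsub G c' ≤ Dsub G c := by
  intro X hX i v hv
  exact Wfl_mono (by omega) (hX i v hv)

theorem Dsub_mul_right {X B : Matrix (Fin m) (Fin m) ℚ} {c : ℕ} (hX : X ∈ Dsub G c)
    (hB : ∀ i : ℕ, ∀ v ∈ Wfl G i, B *ᵥ v ∈ Wfl G i) : X * B ∈ Dsub G c := by
  intro i v hv
  rw [← Matrix.mulVec_mulVec]
  exact hX i _ (hB i v hv)

theorem Dsub_mul_left {X B : Matrix (Fin m) (Fin m) ℚ} {c : ℕ} (hX : X ∈ Dsub G c)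
    (hB : ∀ i : ℕ, ∀ v ∈ Wfl G i, B *ᵥ v ∈ Wfl G i) : B * X ∈ Dsub G c := by
  intro i v hv
  rw [← Matrix.mulVec_mulVec]
  exact hB _ _ (hX i v hv)

theorem Dsub_mul_deep {X Y : Matrix (Fin m) (Fin m) ℚ} {k : ℕ} (hk : 1 ≤ k)
    (hX : X ∈ Dsub G k) (hY : Y ∈ Dsub G k) : X * Y ∈ Dsub G (k + 1) := by
  intro i v hv
  rw [← Matrix.mulVec_mulVec]
  have h1 : Y *ᵥ v ∈ Wfl G (i - k) := hY i v hv
  have h2 : X *ᵥ (Y *ᵥ v) ∈ Wfl G (i - k - k) := hX (i - k) _ h1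
  exact Wfl_mono (by omega) h2

theorem MQ_inv_Wfl (g : G) : ∀ i : ℕ, ∀ v ∈ Wfl G i, MQ g *ᵥ v ∈ Wfl G i :=
  fun _ v hv => Wfl_inv g hv

/-- the subgroup of elements dropping the flag by `k` steps. -/
def Gk (G : Subgroup (Matrix.GeneralLinearGroup (Fin m) ℤ)) (k : ℕ) : Subgroup G where
  carrier := {g | MQ g - 1 ∈ Dsub G k}
  one_mem' := by
    show MQ (1 : G) - 1 ∈ Dsub G k
    rw [MQ_one, sub_self]
    exact zero_mem _
  mul_mem' := by
    intro g h hg hh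
    show MQ (g * h) - 1 ∈ Dsub G k
    have key : MQ (g * h) - 1 = (MQ g - 1) * MQ h + (MQ h - 1) := by
      rw [MQ_mul]; noncomm_ring
    rw [key]
    exact add_mem (Dsub_mul_right hg (MQ_inv_Wfl h)) hh
  inv_mem' := by
    intro g hg
    show MQ g⁻¹ - 1 ∈ Dsub G k
    have key : MQ g⁻¹ - 1 = -(MQ g⁻¹ * (MQ g - 1)) := by
      have : MQ g⁻¹ * (MQ g - 1) = 1 - MQ g⁻¹ := by
        rw [mul_sub, MQ_inv_mul, mul_one]
      rw [this, neg_sub]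
    rw [key]
    exact neg_mem (Dsub_mul_left hg (MQ_inv_Wfl g⁻¹))

theorem mem_Gk {g : G} {k : ℕ} : g ∈ Gk G k ↔ MQ g - 1 ∈ Dsub G k := Iff.rfl

theorem Gk_antitone {k k' : ℕ} (h : k ≤ k') : Gk G k' ≤ Gk G k :=
  fun _ hg => Dsub_antitone h hg

theorem Gk_one_top : Gk G 1 = ⊤ := by
  rw [eq_top_iff]
  intro g _
  rw [mem_Gk, mem_Dsub]
  intro i v hv
  have : (MQ g - 1) *ᵥ v = MQ g *ᵥ v - v := by
    rw [Matrix.sub_mulVec, Matrix.one_mulVec]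
  rw [this]
  exact Wfl_drop g hv

theorem Gk_m_eq_one (htop : Wfl G m = ⊤) {g : G} (hg : g ∈ Gk G m) : g = 1 := by
  have hz : ∀ v : Fin m → ℚ, (MQ g - 1) *ᵥ v = 0 := by
    intro v
    have hv : v ∈ Wfl G m := by rw [htop]; trivial
    have := hg m v hv
    rw [Nat.sub_self] at this
    exact this
  have hmat : MQ g = 1 := by
    have hzero : MQ g - 1 = 0 := by
      ext i j
      have := hz (Pi.single j 1)
      rw [Matrix.mulVec_single] at this
      have := congrFun this i
      simpa using this
    have := sub_eq_zero.mp hzero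
    exact this
  -- transfer back to ℤ and to the unit
  have hint : ((g : Matrix.GeneralLinearGroup (Fin m) ℤ) : Matrix (Fin m) (Fin m) ℤ) = 1 := by
    ext i j
    have h2 := congrFun (congrFun hmat i) j
    unfold MQ at h2
    rw [RingHom.mapMatrix_apply] at h2
    simp only [Matrix.map_apply, Int.coe_castRingHom] at h2
    by_cases hij : i = j
    · subst hij
      rw [Matrix.one_apply_eq] at h2 ⊢
      exact_mod_cast h2
    · simp only [Matrix.one_apply_ne hij] at h2 ⊢
      exact_mod_cast h2
  have hunit : (g : Matrix.GeneralLinearGroup (Fin m) ℤ) = 1 := Units.ext hint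
  exact Subtype.ext hunit

end GkSec

section DeepSec

variable {m : ℕ} {G : Subgroup (Matrix.GeneralLinearGroup (Fin m) ℤ)}

/-- congruence depth predicate. -/
def Deep (N : ℕ) (g : G) : Prop :=
  ∀ i j, (N : ℤ) ∣ (((g : Matrix.GeneralLinearGroup (Fin m) ℤ) : Matrix (Fin m) (Fin m) ℤ) - 1) i j

theorem Deep_of_dvd {N N' : ℕ} (h : N' ∣ N) {g : G} (hg : Deep N g) : Deep N' g :=
  fun i j => dvd_trans (Int.natCast_dvd_natCast.mpr h) (hg i j)

theorem Deep_mul {N : ℕ} {g h : G} (hg : Deep N g) (hh : Deep N h) : Deep N (g * h) := by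
  intro i j
  set A := ((g : Matrix.GeneralLinearGroup (Fin m) ℤ) : Matrix (Fin m) (Fin m) ℤ) with hA
  set B := ((h : Matrix.GeneralLinearGroup (Fin m) ℤ) : Matrix (Fin m) (Fin m) ℤ) with hB
  have key : ((((g * h : G) : Matrix.GeneralLinearGroup (Fin m) ℤ) :
      Matrix (Fin m) (Fin m) ℤ) - 1) = (A - 1) * B + (B - 1) := by
    have : (((g * h : G) : Matrix.GeneralLinearGroup (Fin m) ℤ) :
        Matrix (Fin m) (Fin m) ℤ) = A * B := by
      rw [hA, hB]; norm_cast
    rw [this]; noncomm_ring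
  rw [key]
  simp only [Matrix.add_apply, Matrix.mul_apply]
  apply dvd_add
  · exact Finset.dvd_sum (fun k _ => Dvd.dvd.mul_right (hg i k) _)
  · exact hh i j
theorem Deep_inv {N : ℕ} {g : G} (hg : Deep N g) : Deep N g⁻¹ := by
  intro i j
  set A := ((g : Matrix.GeneralLinearGroup (Fin m) ℤ) : Matrix (Fin m) (Fin m) ℤ) with hA
  set B := ((g⁻¹ : G) : Matrix.GeneralLinearGroup (Fin m) ℤ) with hB'
  set Bm := ((B : Matrix (Fin m) (Fin m) ℤ)) with hB
  have hBA : Bm * A = 1 := by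
    rw [hB, hA, hB']
    have hc : ((g⁻¹ : G) : Matrix.GeneralLinearGroup (Fin m) ℤ)
        = ((g : Matrix.GeneralLinearGroup (Fin m) ℤ))⁻¹ := rfl
    rw [hc]
    exact Units.inv_mul _
  have key : Bm - 1 = Bm * (1 - A) := by
    rw [mul_sub, hBA, mul_one]
  rw [key]
  simp only [Matrix.mul_apply]
  apply Finset.dvd_sum
  intro k _
  apply Dvd.dvd.mul_left
  have h1 : (1 - A) k j = -((A - 1) k j) := by
    simp [Matrix.sub_apply]
  rw [h1]
  exact dvd_neg.mpr (hg k j)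

end DeepSec

section RedSec

variable {m : ℕ} {G : Subgroup (Matrix.GeneralLinearGroup (Fin m) ℤ)}

theorem red_eq_one_iff_deep {N : ℕ} (g : G) :
    glRed m N ((g : Matrix.GeneralLinearGroup (Fin m) ℤ)) = 1 ↔ Deep N g := by
  rw [Units.ext_iff]
  have hval : ((glRed m N ((g : Matrix.GeneralLinearGroup (Fin m) ℤ))) :
      Matrix (Fin m) (Fin m) (ZMod N))
      = (((g : Matrix.GeneralLinearGroup (Fin m) ℤ) : Matrix (Fin m) (Fin m) ℤ)).map
        (Int.cast : ℤ → ZMod N) := by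
    unfold glRed
    rw [Units.coe_map]
    rfl
  rw [hval, Units.val_one, ← Matrix.ext_iff]
  unfold Deep
  apply forall_congr'; intro i; apply forall_congr'; intro j
  rw [Matrix.map_apply, Matrix.sub_apply,
    ← ZMod.intCast_zmod_eq_zero_iff_dvd, Int.cast_sub, sub_eq_zero]
  have hone : ((((1 : Matrix (Fin m) (Fin m) ℤ) i j : ℤ)) : ZMod N)
      = (1 : Matrix (Fin m) (Fin m) (ZMod N)) i j := by
    by_cases hij : i = j
    · subst hij; rw [Matrix.one_apply_eq, Matrix.one_apply_eq]; exact Int.cast_one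
    · rw [Matrix.one_apply_ne hij, Matrix.one_apply_ne hij]; exact Int.cast_zero
  rw [hone]

/-- the congruence subgroup of level `N` inside `G`. -/
def KN (G : Subgroup (Matrix.GeneralLinearGroup (Fin m) ℤ)) (N : ℕ) : Subgroup G :=
  ((glRed m N).comp G.subtype).ker

theorem mem_KN {N : ℕ} {g : G} : g ∈ KN G N ↔ Deep N g := by
  rw [KN, MonoidHom.mem_ker, MonoidHom.comp_apply]
  exact red_eq_one_iff_deep g

theorem KN_finiteIndex {N : ℕ} (hN : 0 < N) : (KN G N).FiniteIndex := by
  haveI : NeZero N := ⟨by omega⟩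
  haveI : Finite (Matrix.GeneralLinearGroup (Fin m) (ZMod N)) := by
    show Finite (Matrix (Fin m) (Fin m) (ZMod N))ˣ
    infer_instance
  constructor
  rw [KN, Subgroup.index_ker]
  haveI : Nonempty (((glRed m N).comp G.subtype).range) := ⟨1⟩
  exact Nat.card_pos.ne'

end RedSec

section SpanSec

theorem denom_clear {M : Type*} [AddCommGroup M] [Module ℚ M] (s : Set M) {y : M}
    (hy : y ∈ Submodule.span ℚ s) : ∃ c : ℕ, 0 < c ∧ (c : ℤ) • y ∈ Submodule.span ℤ s := by
  induction hy using Submodule.span_induction with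
  | mem x hx => exact ⟨1, one_pos, by simpa using Submodule.subset_span hx⟩
  | zero => exact ⟨1, one_pos, by simp⟩
  | add x y hx hy ihx ihy =>
      obtain ⟨c₁, hc₁, h₁⟩ := ihx
      obtain ⟨c₂, hc₂, h₂⟩ := ihy
      refine ⟨c₁ * c₂, by positivity, ?_⟩
      have key : ((c₁ * c₂ : ℕ) : ℤ) • (x + y)
          = (c₂ : ℤ) • ((c₁ : ℤ) • x) + (c₁ : ℤ) • ((c₂ : ℤ) • y) := by
        rw [smul_add, smul_smul, smul_smul]
        push_cast
        ring_nf
      rw [key]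
      exact add_mem (Submodule.smul_mem _ _ h₁) (Submodule.smul_mem _ _ h₂)
  | smul q x hx ihx =>
      obtain ⟨c, hc, h⟩ := ihx
      have hne : (q.den : ℚ) ≠ 0 := by
        exact_mod_cast q.den_ne_zero
      have hden : ((q.den : ℚ)) * q = (q.num : ℚ) := by
        rw [mul_comm]
        nth_rewrite 1 [← Rat.num_div_den q]
        rw [div_mul_cancel₀ _ hne]
      refine ⟨q.den * c, by positivity, ?_⟩
      have key : ((q.den * c : ℕ) : ℤ) • (q • x) = q.num • ((c : ℤ) • x) := by
        rw [← Int.cast_smul_eq_zsmul ℚ (((q.den * c : ℕ) : ℤ)) (q • x),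
          ← Int.cast_smul_eq_zsmul ℚ ((c : ℤ)) x,
          ← Int.cast_smul_eq_zsmul ℚ q.num, smul_smul, smul_smul]
        congr 1
        push_cast
        rw [show ((q.den : ℚ) * (c : ℚ)) * q = ((q.den : ℚ) * q) * (c : ℚ) by ring, hden]
      rw [key]
      exact Submodule.smul_mem _ _ h

end SpanSec

section PsiSec

variable {m : ℕ} {G : Subgroup (Matrix.GeneralLinearGroup (Fin m) ℤ)}

/-- the additive coordinate at level `k`. -/
def PSI (G : Subgroup (Matrix.GeneralLinearGroup (Fin m) ℤ)) (k : ℕ) (g : G) :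
    Matrix (Fin m) (Fin m) ℚ ⧸ Dsub G (k + 1) :=
  Submodule.Quotient.mk (MQ g - 1)

theorem PSI_one (k : ℕ) : PSI G k 1 = 0 := by
  unfold PSI
  rw [MQ_one, sub_self]
  exact Submodule.Quotient.mk_eq_zero _ |>.mpr (zero_mem _)

theorem PSI_mul {k : ℕ} (hk : 1 ≤ k) {g h : G} (hg : g ∈ Gk G k) (hh : h ∈ Gk G k) :
    PSI G k (g * h) = PSI G k g + PSI G k h := by
  unfold PSI
  rw [← Submodule.Quotient.mk_add]
  rw [Submodule.Quotient.eq]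
  have key : MQ (g * h) - 1 - (MQ g - 1 + (MQ h - 1)) = (MQ g - 1) * (MQ h - 1) := by
    rw [MQ_mul]
    noncomm_ring
  rw [key]
  exact Dsub_mul_deep hk hg hh

theorem PSI_inv {k : ℕ} (hk : 1 ≤ k) {g : G} (hg : g ∈ Gk G k) :
    PSI G k g⁻¹ = - PSI G k g := by
  have h0 : PSI G k (g * g⁻¹) = PSI G k g + PSI G k g⁻¹ :=
    PSI_mul hk hg (inv_mem hg)
  rw [mul_inv_cancel, PSI_one] at h0
  exact (neg_eq_of_add_eq_zero_right h0.symm).symm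

theorem PSI_pow {k : ℕ} (hk : 1 ≤ k) {g : G} (hg : g ∈ Gk G k) (n : ℕ) :
    PSI G k (g ^ n) = n • PSI G k g := by
  induction n with
  | zero => rw [pow_zero, PSI_one, zero_smul]
  | succ n ihn =>
      rw [pow_succ, PSI_mul hk (pow_mem hg n) hg, ihn, succ_nsmul]

theorem PSI_zpow {k : ℕ} (hk : 1 ≤ k) {g : G} (hg : g ∈ Gk G k) (z : ℤ) :
    PSI G k (g ^ z) = z • PSI G k g := by
  cases z with
  | ofNat n =>
      rw [Int.ofNat_eq_coe, zpow_natCast, PSI_pow hk hg n, natCast_zsmul]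
  | negSucc n =>
      rw [zpow_negSucc, PSI_inv hk (pow_mem hg (n+1)), PSI_pow hk hg (n+1),
        Int.negSucc_eq, ← Nat.cast_add_one, neg_zsmul, natCast_zsmul]

end PsiSec

section StepSec

variable {m : ℕ} {G : Subgroup (Matrix.GeneralLinearGroup (Fin m) ℤ)}

theorem stmt_step (k : ℕ) (hk : 1 ≤ k)
    (IH : ∀ S : Subgroup G, S.FiniteIndex →
      ∃ N : ℕ, 0 < N ∧ ∀ g ∈ Gk G (k+1), Deep N g → g ∈ S) :
    ∀ S : Subgroup G, S.FiniteIndex →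
      ∃ N : ℕ, 0 < N ∧ ∀ g ∈ Gk G k, Deep N g → g ∈ S := by
  intro S hS
  obtain ⟨N₂, hN₂pos, hN₂⟩ := IH S hS
  haveI := hS
  haveI : (KN G N₂).FiniteIndex := KN_finiteIndex hN₂pos
  set S₁ : Subgroup G := S ⊓ KN G N₂ with hS₁def
  haveI : S₁.FiniteIndex := by rw [hS₁def]; infer_instance
  set S₂ : Subgroup G := S₁.normalCore with hS₂def
  haveI hS₂norm : S₂.Normal := by rw [hS₂def]; infer_instance
  haveI hS₂fi : S₂.FiniteIndex := by rw [hS₂def]; infer_instance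
  set e := S₂.index with he
  have hepos : 0 < e := Nat.pos_of_ne_zero hS₂fi.index_ne_zero
  have hpow : ∀ g : G, g ^ e ∈ S₂ := fun g => Subgroup.pow_index_mem S₂ g
  -- the image set of PSI on Gk
  set s : Set (Matrix (Fin m) (Fin m) ℚ ⧸ Dsub G (k+1)) :=
    (fun g : G => PSI G k g) '' (Gk G k : Set G) with hs
  -- the e-divisibility lemma
  have elem : ∀ x ∈ Submodule.span ℤ s, ∃ t : G, (t ∈ S₂ ∧ t ∈ Gk G k) ∧
      (e : ℤ) • x = PSI G k t := by
    intro x hx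
    induction hx using Submodule.span_induction with
    | mem x hxs =>
        obtain ⟨g, hg, rfl⟩ := hxs
        refine ⟨g ^ e, ⟨hpow g, pow_mem hg e⟩, ?_⟩
        rw [PSI_pow hk hg e, natCast_zsmul]
    | zero =>
        exact ⟨1, ⟨one_mem _, one_mem _⟩, by rw [PSI_one]; simp⟩
    | add x y hx hy ihx ihy =>
        obtain ⟨t₁, ⟨ht₁S, ht₁G⟩, h₁⟩ := ihx
        obtain ⟨t₂, ⟨ht₂S, ht₂G⟩, h₂⟩ := ihy
        refine ⟨t₁ * t₂, ⟨mul_mem ht₁S ht₂S, mul_mem ht₁G ht₂G⟩, ?_⟩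
        rw [PSI_mul hk ht₁G ht₂G, smul_add, h₁, h₂]
    | smul z x hx ihx =>
        obtain ⟨t, ⟨htS, htG⟩, h⟩ := ihx
        refine ⟨t ^ z, ⟨zpow_mem htS z, zpow_mem htG z⟩, ?_⟩
        rw [PSI_zpow hk htG z, ← h, smul_comm]
  -- lattices
  set π : Matrix (Fin m) (Fin m) ℚ →ₗ[ℚ] (Matrix (Fin m) (Fin m) ℚ ⧸ Dsub G (k+1)) :=
    (Dsub G (k+1)).mkQ with hπ
  set intLat : Submodule ℤ (Matrix (Fin m) (Fin m) ℚ) := Submodule.span ℤ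
      (Set.range fun p : (Fin m) × (Fin m) => Matrix.single p.1 p.2 (1:ℚ)) with hintLat
  have hintLat_mem : ∀ Z : Matrix (Fin m) (Fin m) ℤ,
      (Z.map (Int.cast : ℤ → ℚ)) ∈ intLat := by
    intro Z
    rw [Matrix.matrix_eq_sum_single (Z.map (Int.cast : ℤ → ℚ))]
    apply Submodule.sum_mem
    intro i _
    apply Submodule.sum_mem
    intro j _
    have h1 : (Z.map (Int.cast : ℤ → ℚ)) i j = ((Z i j : ℚ)) := rfl
    have h2 : Matrix.single i j ((Z i j : ℚ))
        = (Z i j) • Matrix.single i j (1 : ℚ) := by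
      rw [Matrix.smul_single]
      congr 1
      rw [zsmul_eq_mul, mul_one]
    rw [h1, h2]
    exact Submodule.smul_mem _ _ (Submodule.subset_span ⟨(i, j), rfl⟩)
  set πz := π.toAddMonoidHom.toIntLinearMap with hπz
  have hπzapp : ∀ X, πz X = Submodule.Quotient.mk X := fun X => rfl
  set Ω := Submodule.map πz intLat with hΩ
  have hΩfg : Ω.FG := Submodule.FG.map _ (Submodule.fg_span (Set.finite_range _))
  set E := Submodule.span ℚ s with hE
  set ΩE := Ω ⊓ E.restrictScalars ℤ with hΩE
  have hΩEfg : ΩE.FG := by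
    haveI : IsNoetherian ℤ Ω := isNoetherian_of_fg_of_noetherian Ω hΩfg
    have h1 : (ΩE.comap Ω.subtype).FG := IsNoetherian.noetherian _
    have h2 : Submodule.map Ω.subtype (ΩE.comap Ω.subtype) = ΩE := by
      rw [Submodule.map_comap_subtype]
      exact inf_eq_right.mpr (by rw [hΩE]; exact inf_le_left)
    rw [← h2]
    exact Submodule.FG.map _ h1
  -- uniform denominator for ΩE
  have hc : ∃ c : ℕ, 0 < c ∧ ∀ x ∈ ΩE, (c : ℤ) • x ∈ Submodule.span ℤ s := by
    obtain ⟨T, hT⟩ := hΩEfg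
    have hgen : ∀ y : T, ∃ c : ℕ, 0 < c ∧ (c : ℤ) • y.1 ∈ Submodule.span ℤ s := by
      intro y
      have hyΩE : y.1 ∈ ΩE := by
        rw [← hT]
        exact Submodule.subset_span y.2
      have hyE : y.1 ∈ Submodule.span ℚ s := by
        have h3 := hyΩE
        rw [hΩE] at h3
        exact h3.2
      exact denom_clear s hyE
    choose f hf0 hf using hgen
    refine ⟨∏ y ∈ T.attach, f y, Finset.prod_pos (fun y _ => hf0 y), ?_⟩
    intro x hx
    rw [← hT] at hx
    induction hx using Submodule.span_induction with
    | mem x hxT =>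
        obtain ⟨u, hu⟩ := Finset.dvd_prod_of_mem f (Finset.mem_attach T ⟨x, hxT⟩)
        rw [hu]
        have : ((f ⟨x, hxT⟩ * u : ℕ) : ℤ) • x = (u : ℤ) • ((f ⟨x, hxT⟩ : ℤ) • x) := by
          rw [smul_smul]
          push_cast
          ring_nf
        rw [this]
        exact Submodule.smul_mem _ _ (hf ⟨x, hxT⟩)
    | zero => simp
    | add x y hx hy ihx ihy =>
        rw [smul_add]
        exact add_mem ihx ihy
    | smul z x hx ihx =>
        rw [smul_comm]
        exact Submodule.smul_mem _ _ ihx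
  obtain ⟨c, hcpos, hcmem⟩ := hc
  -- the level
  refine ⟨c * (e * N₂), by positivity, ?_⟩
  intro g hgk hdeep
  -- write g - 1 = N • Z over ℤ
  set N := c * (e * N₂) with hN
  have hNpos : 0 < N := by positivity
  set B := (((g : Matrix.GeneralLinearGroup (Fin m) ℤ) : Matrix (Fin m) (Fin m) ℤ) - 1) with hB
  have hdvd : ∀ i j, (N : ℤ) ∣ B i j := hdeep
  set Z : Matrix (Fin m) (Fin m) ℤ := Matrix.of (fun i j => B i j / N) with hZ
  have hBZ : B = (N : ℤ) • Z := by
    ext i j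
    rw [hZ]
    show B i j = (N : ℤ) * (B i j / N)
    rw [Int.mul_ediv_cancel' (hdvd i j)]
  -- over ℚ
  have hMQZ : MQ g - 1 = (N : ℚ) • (Z.map (Int.cast : ℤ → ℚ)) := by
    ext i j
    unfold MQ
    rw [RingHom.mapMatrix_apply]
    simp only [Matrix.sub_apply, Matrix.map_apply, Matrix.smul_apply, Int.coe_castRingHom,
      smul_eq_mul]
    have hBij : B i j = (N : ℤ) * Z i j := by rw [hBZ]; simp [Matrix.smul_apply]
    have : ((((g : Matrix.GeneralLinearGroup (Fin m) ℤ) : Matrix (Fin m) (Fin m) ℤ)) i j : ℚ)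
        - (1 : Matrix (Fin m) (Fin m) ℚ) i j = ((B i j : ℤ) : ℚ) := by
      rw [hB]
      simp only [Matrix.sub_apply]
      push_cast
      congr 1
      by_cases hij : i = j
      · subst hij; rw [Matrix.one_apply_eq, Matrix.one_apply_eq]; norm_num
      · rw [Matrix.one_apply_ne hij, Matrix.one_apply_ne hij]; norm_num
    rw [this, hBij]
    push_cast
    ring
  -- the quotient computation
  have hPSIg : PSI G k g = (N : ℚ) • (πz (Z.map (Int.cast : ℤ → ℚ))) := by
    unfold PSI
    rw [hMQZ, hπzapp]
    exact (Submodule.Quotient.mk_smul _ _ _).symm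
  set ω := πz (Z.map (Int.cast : ℤ → ℚ)) with hω
  have hωΩ : ω ∈ Ω := Submodule.mem_map_of_mem (hintLat_mem Z)
  have hωE : ω ∈ Submodule.span ℚ s := by
    have hginv : (((N : ℚ))⁻¹ • PSI G k g) = ω := by
      rw [hPSIg, smul_smul, inv_mul_cancel₀ (by positivity : (N:ℚ) ≠ 0), one_smul]
    rw [← hginv]
    exact Submodule.smul_mem _ _ (Submodule.subset_span ⟨g, hgk, rfl⟩)
  have hωΩE : ω ∈ ΩE := by
    rw [hΩE]
    exact ⟨hωΩ, hωE⟩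
  -- extract s-element with equal PSI
  have hsmulstep : PSI G k g = (e : ℤ) • ((N₂ : ℤ) • ((c : ℤ) • ω)) := by
    rw [hPSIg]
    rw [← Int.cast_smul_eq_zsmul ℚ ((c : ℤ)) ω, ← Int.cast_smul_eq_zsmul ℚ ((N₂ : ℤ)),
      ← Int.cast_smul_eq_zsmul ℚ ((e : ℤ)), smul_smul, smul_smul]
    congr 1
    rw [hN]
    push_cast
    ring
  have hlam : (N₂ : ℤ) • ((c : ℤ) • ω) ∈ Submodule.span ℤ s :=
    Submodule.smul_mem _ _ (hcmem ω hωΩE)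
  obtain ⟨t, ⟨htS₂, htGk⟩, ht⟩ := elem _ hlam
  have hPSIeq : PSI G k g = PSI G k t := by rw [hsmulstep, ht]
  -- now g * t⁻¹ is in Gk (k+1) and is N₂-deep
  have htdeep : Deep N₂ t := by
    have : t ∈ KN G N₂ := by
      have := htS₂
      rw [hS₂def] at this
      have := Subgroup.normalCore_le S₁ this
      rw [hS₁def] at this
      exact this.2
    exact mem_KN.mp this
  have hgt : g * t⁻¹ ∈ Gk G (k+1) := by
    rw [mem_Gk]
    have h0 : PSI G k (g * t⁻¹) = 0 := by
      rw [PSI_mul hk hgk (inv_mem htGk), PSI_inv hk htGk, hPSIeq]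
      simp
    unfold PSI at h0
    rwa [Submodule.Quotient.mk_eq_zero] at h0
  have hgtdeep : Deep N₂ (g * t⁻¹) := by
    apply Deep_mul
    · exact Deep_of_dvd ⟨c * e, by rw [hN]; ring⟩ hdeep
    · exact Deep_inv htdeep
  have hgtS : g * t⁻¹ ∈ S := hN₂ _ hgt hgtdeep
  have htS : t ∈ S := by
    have := htS₂
    rw [hS₂def] at this
    have := Subgroup.normalCore_le S₁ this
    rw [hS₁def] at this
    exact this.1
  have : (g * t⁻¹) * t ∈ S := mul_mem hgtS htS
  rwa [inv_mul_cancel_right] at this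

end StepSec

section AssembleSec

variable {m : ℕ} {G : Subgroup (Matrix.GeneralLinearGroup (Fin m) ℤ)}

theorem stmt_base (htop : Wfl G m = ⊤) :
    ∀ S : Subgroup G, S.FiniteIndex → ∃ N : ℕ, 0 < N ∧ ∀ g ∈ Gk G m, Deep N g → g ∈ S := by
  intro S _
  exact ⟨1, one_pos, fun g hg _ => by rw [Gk_m_eq_one htop hg]; exact one_mem S⟩

theorem stmt_all (htop : Wfl G m = ⊤) :
    ∀ r : ℕ, ∀ S : Subgroup G, S.FiniteIndex →
      ∃ N : ℕ, 0 < N ∧ ∀ g ∈ Gk G (m - r), Deep N g → g ∈ S := by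
  intro r
  induction r with
  | zero => simpa using stmt_base htop
  | succ r ih =>
      by_cases h : m ≤ r
      · have h1 : m - (r+1) = m - r := by omega
        rw [h1]; exact ih
      · have h2 : m - r = (m - (r + 1)) + 1 := by omega
        by_cases hk : 1 ≤ m - (r + 1)
        · exact stmt_step (m - (r+1)) hk (by rw [← h2]; exact ih)
        · have hk0 : m - (r + 1) = 0 := by omega
          rw [hk0]
          intro S hS
          obtain ⟨N, hN, hmem⟩ := ih S hS
          refine ⟨N, hN, fun g _ hd => ?_⟩
          refine hmem g ?_ hd
          rw [h2, hk0]
          have hg1 : g ∈ (⊤ : Subgroup G) := trivial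
          rw [← Gk_one_top] at hg1
          exact hg1

theorem ds_top_bot (d : ℕ) (F : Fin (d+1) → Subgroup G)
    (hF0 : F 0 = ⊤) (hFd : F (Fin.last d) = ⊥)
    (hGa : ∀ i : Fin d, ∃ φ : (F i.castSucc) →* Multiplicative ℤ,
      Function.Surjective φ ∧ φ.ker = (F i.succ).subgroupOf (F i.castSucc)) :
    ds (⊤ : Subgroup G) d = ⊥ := by
  have hcomm : ∀ i : Fin d, ⁅F i.castSucc, F i.castSucc⁆ ≤ F i.succ := by
    intro i
    obtain ⟨φ, hφs, hφk⟩ := hGa i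
    rw [Subgroup.commutator_le]
    intro x hx y hy
    have hmem : (⟨x, hx⟩ : F i.castSucc) * ⟨y, hy⟩ * (⟨x, hx⟩)⁻¹ * (⟨y, hy⟩)⁻¹ ∈ φ.ker := by
      rw [MonoidHom.mem_ker, _root_.map_mul, _root_.map_mul, _root_.map_mul, map_inv, map_inv]
      have habel : ∀ a b : Multiplicative ℤ, a * b * a⁻¹ * b⁻¹ = 1 := by
        intro a b; rw [mul_comm a b]; group
      exact habel _ _
    rw [hφk, Subgroup.mem_subgroupOf] at hmem
    simpa [commutatorElement_def] using hmem
  have hchain : ∀ j : ℕ, (hj : j ≤ d) → ds (⊤ : Subgroup G) j ≤ F ⟨j, by omega⟩ := by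
    intro j
    induction j with
    | zero =>
        intro hj
        have h0 : (⟨0, by omega⟩ : Fin (d+1)) = 0 := rfl
        rw [h0, hF0]
        exact le_top
    | succ j ihj =>
        intro hj
        have hj' : j < d := by omega
        have h2 := ihj (by omega)
        have hcs : (⟨j, by omega⟩ : Fin (d+1)) = (⟨j, hj'⟩ : Fin d).castSucc := rfl
        have hsc : (⟨j+1, by omega⟩ : Fin (d+1)) = (⟨j, hj'⟩ : Fin d).succ := rfl
        calc ds (⊤ : Subgroup G) (j+1) = ⁅ds ⊤ j, ds ⊤ j⁆ := rfl
          _ ≤ ⁅F ⟨j, by omega⟩, F ⟨j, by omega⟩⁆ := Subgroup.commutator_mono h2 h2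
          _ ≤ F ⟨j+1, by omega⟩ := by
              rw [hcs, hsc]
              exact hcomm ⟨j, hj'⟩
  have hfin := hchain d le_rfl
  have hlast : (⟨d, by omega⟩ : Fin (d+1)) = Fin.last d := rfl
  rw [hlast, hFd] at hfin
  exact le_bot_iff.mp hfin

end AssembleSec

end CSPaux

/-- let `G = U(ℤ)` be the group of integer points of a unipotent algebraic
`ℚ`-group `U`, admitting a filtration by normal subgroups with successive quotients `𝔾_a`
(on integral points: infinite cyclic quotients). Then every finite-index subgroup of any
arithmetic subgroup `Γ` of `U(ℚ)` (i.e. of a subgroup of `GL_m(ℚ)` commensurable with `G`)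
is a congruence subgroup: it contains the kernel of the reduction `U(ℤ) → U(ℤ/N)` for
some `N ≥ 1`. -/
theorem congruence_subgroup_property_unipotent (m : ℕ)
    (G : Subgroup (Matrix.GeneralLinearGroup (Fin m) ℤ))
    -- every element of `G` is a unipotent matrix:
    (huni : ∀ g ∈ G, ((g : Matrix (Fin m) (Fin m) ℤ) - 1) ^ m = 0)
    -- the filtration coming from `U = U₀ ⊇ U₁ ⊇ ⋯ ⊇ U_d = 1` with quotients `𝔾_a`:
    (d : ℕ) (F : Fin (d + 1) → Subgroup G)
    (hF0 : F 0 = ⊤) (hFd : F (Fin.last d) = ⊥)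
    (hmono : ∀ i : Fin d, F i.succ ≤ F i.castSucc)
    (hnorm : ∀ i : Fin (d + 1), (F i).Normal)
    (hGa : ∀ i : Fin d, ∃ φ : (F i.castSucc) →* Multiplicative ℤ,
      Function.Surjective φ ∧ φ.ker = (F i.succ).subgroupOf (F i.castSucc))
    -- `Γ` is an arithmetic subgroup of `U(ℚ)`:
    (Γ : Subgroup (Matrix.GeneralLinearGroup (Fin m) ℚ))
    (harith : Subgroup.Commensurable Γ (G.map (glIntToRat m))) :
    ∀ H : Subgroup (Matrix.GeneralLinearGroup (Fin m) ℚ), H ≤ Γ →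
      (H.subgroupOf Γ).FiniteIndex →
      ∃ N : ℕ, 0 < N ∧
        ∀ g ∈ G, glRed m N g = 1 → glIntToRat m g ∈ H := by
  intro H hHle hHfi
  have hu : ∀ g : G, (CSPaux.MQ g - 1) ^ m = 0 := by
    intro g
    have h1 := huni (g : Matrix.GeneralLinearGroup (Fin m) ℤ) g.2
    unfold CSPaux.MQ
    have h2 : ((Int.castRingHom ℚ).mapMatrix
          (((g : Matrix.GeneralLinearGroup (Fin m) ℤ) : Matrix (Fin m) (Fin m) ℤ))
          : Matrix (Fin m) (Fin m) ℚ) - 1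
        = (Int.castRingHom ℚ).mapMatrix
          ((((g : Matrix.GeneralLinearGroup (Fin m) ℤ) : Matrix (Fin m) (Fin m) ℤ)) - 1) := by
      rw [map_sub, _root_.map_one]
    rw [h2, ← _root_.map_pow, h1, _root_.map_zero]
  have hsolv : ∃ dd, CSPaux.ds (⊤ : Subgroup G) dd = ⊥ :=
    ⟨d, CSPaux.ds_top_bot d F hF0 hFd hGa⟩
  have htop := CSPaux.Wfl_top hu hsolv
  set S : Subgroup G := (H.comap (glIntToRat m)).subgroupOf G with hSdef
  have hSfi : S.FiniteIndex := by
    constructor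
    have h1 : S.index = (H.comap (glIntToRat m)).relIndex G := rfl
    rw [h1, Subgroup.relIndex_comap]
    exact Subgroup.relIndex_ne_zero_trans hHfi.index_ne_zero harith.1
  obtain ⟨N, hNpos, hmem⟩ := CSPaux.stmt_all htop (m - 1) S hSfi
  refine ⟨N, hNpos, ?_⟩
  intro g hg hred
  have hdeep : CSPaux.Deep N (⟨g, hg⟩ : G) := (CSPaux.red_eq_one_iff_deep _).mp hred
  have hgk : (⟨g, hg⟩ : G) ∈ CSPaux.Gk G (m - (m - 1)) := by
    have h1 : (⟨g, hg⟩ : G) ∈ CSPaux.Gk G 1 := by rw [CSPaux.Gk_one_top]; trivial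
    exact CSPaux.Gk_antitone (by omega) h1
  have hfinal := hmem _ hgk hdeep
  rw [hSdef, Subgroup.mem_subgroupOf, Subgroup.mem_comap] at hfinal
  exact hfinal
end
end
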